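/- arXiv:2208.02549 — 4 statements merged into one kernel-verified Lean document; each statement's English description precedes it below -/
import Mathlib

section
/- Let n ≥ 1, let g ∈ Sp(n, ℚ), and suppose d = diag(d₁, …, dₙ) and d' = diag(d'₁, …, d'ₙ) are two diagonal matrices with positive integer entries satisfying d₁ ∣ d₂ ∣ … ∣ dₙ and d'₁ ∣ d'₂ ∣ … ∣ d'ₙ such that both block matrices diag(d, d⁻¹) and diag(d', d'⁻¹) lie in the double coset Sp(n, ℤ) · g · Sp(n, ℤ). Then d = d'. In other words, the diagonal matrix in the symplectic Smith normal form of a rational symplectic matrix is unique. -/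
open Matrix

noncomputable section

/-- The standard symplectic matrix `J = (0, 1ₙ; -1ₙ, 0)` of size `2n` over `R`. -/
def symplecticJ (n : ℕ) (R : Type*) [CommRing R] :
    Matrix (Fin n ⊕ Fin n) (Fin n ⊕ Fin n) R :=
  fromBlocks 0 1 (-1) 0

/-- `g` belongs to the symplectic group `Sp(n, R)`: `ᵗg J g = J`. -/
def IsSymplectic {n : ℕ} {R : Type*} [CommRing R]
    (g : Matrix (Fin n ⊕ Fin n) (Fin n ⊕ Fin n) R) : Prop :=
  gᵀ * symplecticJ n R * g = symplecticJ n R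

section Aux
open Finset


variable {ι : Type*} [Fintype ι] [DecidableEq ι]

lemma dvd_det_submatrix_mul_left {k : ℕ} (Δ : ℤ) (B C : Matrix ι ι ℤ)
    (hC : ∀ f g : Fin k → ι, Δ ∣ ((C.submatrix f g).det))
    (f g : Fin k → ι) : Δ ∣ (((B * C).submatrix f g).det) := by
  have hrows : ((B * C).submatrix f g) =
      fun i : Fin k => ∑ t : ι, B (f i) t • (fun j : Fin k => C t (g j)) := by
    funext i j
    simp [Matrix.mul_apply, Finset.sum_apply]
  have h1 : ((B * C).submatrix f g).det =
      (Matrix.detRowAlternating ((B*C).submatrix f g) : ℤ) := rfl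
  rw [h1, hrows]
  rw [show (Matrix.detRowAlternating (fun i : Fin k =>
        ∑ t : ι, B (f i) t • (fun j : Fin k => C t (g j))) : ℤ) =
      ∑ r : Fin k → ι, Matrix.detRowAlternating
        (fun i : Fin k => B (f i) (r i) • (fun j : Fin k => C (r i) (g j)))
    from (Matrix.detRowAlternating (R := ℤ) (n := Fin k)).toMultilinearMap.map_sum
      (g := fun i t => B (f i) t • (fun j : Fin k => C t (g j)))]
  refine Finset.dvd_sum fun r _ => ?_
  rw [show (Matrix.detRowAlternating
        (fun i : Fin k => B (f i) (r i) • (fun j : Fin k => C (r i) (g j))) : ℤ) =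
      (∏ i : Fin k, B (f i) (r i)) •
        Matrix.detRowAlternating (fun i : Fin k => (fun j : Fin k => C (r i) (g j)))
    from (Matrix.detRowAlternating (R := ℤ) (n := Fin k)).toMultilinearMap.map_smul_univ _ _]
  have : (Matrix.detRowAlternating
      (fun i : Fin k => (fun j : Fin k => C (r i) (g j))) : ℤ) = (C.submatrix r g).det := rfl
  rw [this, smul_eq_mul]
  exact Dvd.dvd.mul_left (hC r g) _

lemma dvd_det_submatrix_mul_right {k : ℕ} (Δ : ℤ) (B C : Matrix ι ι ℤ)
    (hC : ∀ f g : Fin k → ι, Δ ∣ ((C.submatrix f g).det))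
    (f g : Fin k → ι) : Δ ∣ (((C * B).submatrix f g).det) := by
  have h1 : ((C * B).submatrix f g).det = ((Bᵀ * Cᵀ).submatrix g f).det := by
    rw [← Matrix.det_transpose ((C * B).submatrix f g)]
    simp [Matrix.transpose_submatrix, Matrix.transpose_mul]
  rw [h1]
  refine dvd_det_submatrix_mul_left Δ _ _ (fun a b => ?_) g f
  have : (Cᵀ.submatrix a b) = (C.submatrix b a)ᵀ := by
    ext i j; simp
  rw [this, Matrix.det_transpose]
  exact hC b a

/-- `gcdMinors k A` : the gcd of all `k × k` minors of `A`, as a natural number. -/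
def gcdMinors (k : ℕ) (A : Matrix ι ι ℤ) : ℕ :=
  Finset.gcd Finset.univ
    (fun p : (Fin k → ι) × (Fin k → ι) => ((A.submatrix p.1 p.2).det).natAbs)

lemma gcdMinors_dvd (k : ℕ) (A : Matrix ι ι ℤ) (f g : Fin k → ι) :
    (gcdMinors k A : ℤ) ∣ (A.submatrix f g).det := by
  rw [Int.natCast_dvd]
  exact Finset.gcd_dvd (Finset.mem_univ (f, g))

lemma dvd_gcdMinors (k : ℕ) (A : Matrix ι ι ℤ) (Δ : ℤ)
    (h : ∀ f g : Fin k → ι, Δ ∣ (A.submatrix f g).det) : Δ.natAbs ∣ gcdMinors k A := by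
  refine Finset.dvd_gcd fun p _ => ?_
  exact Int.natAbs_dvd_natAbs.2 (h p.1 p.2)

lemma gcdMinors_dvd_mul_mul (k : ℕ) (A U V : Matrix ι ι ℤ) :
    gcdMinors k A ∣ gcdMinors k (U * A * V) := by
  have h0 : ∀ f g : Fin k → ι, ((gcdMinors k A : ℤ)) ∣ ((A * V).submatrix f g).det :=
    dvd_det_submatrix_mul_right _ V A (gcdMinors_dvd k A)
  have h1 : ∀ f g : Fin k → ι, ((gcdMinors k A : ℤ)) ∣ ((U * (A * V)).submatrix f g).det :=
    dvd_det_submatrix_mul_left _ U (A * V) h0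
  have := dvd_gcdMinors k (U * A * V) (gcdMinors k A)
    (by rw [mul_assoc]; exact h1)
  simpa using this

section Chain

variable {N : ℕ} (e : Fin N → ℤ)

lemma strictMono_nat_le {k : ℕ} (f : Fin k → Fin N) (hf : StrictMono f) (i : Fin k) :
    (i : ℕ) ≤ (f i : ℕ) := by
  obtain ⟨m, hm⟩ := i
  induction m with
  | zero => exact Nat.zero_le _
  | succ p ih =>
    have hp : p < k := by omega
    have h1 : (f ⟨p, hp⟩ : ℕ) < (f ⟨p + 1, hm⟩ : ℕ) := hf (by simp [Fin.lt_def])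
    have h2 := ih hp
    simpa using Nat.lt_of_le_of_lt h2 h1

end Chain

section Chain2

variable {N : ℕ}

lemma prod_first_dvd (e : Fin N → ℤ) (hchain : ∀ i j : Fin N, i ≤ j → e i ∣ e j)
    {k : ℕ} (hk : k ≤ N) (f : Fin k → Fin N) (hf : Function.Injective f) :
    (∏ i : Fin k, e (Fin.castLE hk i)) ∣ ∏ i : Fin k, e (f i) := by
  set S : Finset (Fin N) := Finset.univ.image f with hS
  have hcard : S.card = k := by
    rw [hS, Finset.card_image_of_injective _ hf, Finset.card_univ, Fintype.card_fin]
  have h1 : ∏ i : Fin k, e (f i) = ∏ x ∈ S, e x := by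
    rw [hS, Finset.prod_image (fun a _ b _ h => hf h)]
  have h2 : ∏ x ∈ S, e x = ∏ i : Fin k, e (S.orderEmbOfFin hcard i) := by
    rw [← Finset.prod_image (f := fun x => e x)
      (g := fun i : Fin k => S.orderEmbOfFin hcard i)
      (fun a _ b _ h => (S.orderEmbOfFin hcard).injective h)]
    congr 1
    ext x
    simp only [Finset.mem_image, Finset.mem_univ, true_and]
    constructor
    · intro hx
      have hx' : x ∈ Set.range ⇑(S.orderEmbOfFin hcard) := by
        rw [Finset.range_orderEmbOfFin S hcard]; exact hx
      obtain ⟨i, hi⟩ := hx'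
      exact ⟨i, hi⟩
    · rintro ⟨i, rfl⟩
      exact Finset.orderEmbOfFin_mem S hcard i
  rw [h1, h2]
  refine Finset.prod_dvd_prod_of_dvd _ _ fun i _ => ?_
  refine hchain _ _ ?_
  have := strictMono_nat_le (fun i => S.orderEmbOfFin hcard i)
    (fun a b hab => (S.orderEmbOfFin hcard).strictMono hab) i
  simpa [Fin.le_def] using this

lemma prod_first_dvd_minor (e : Fin N → ℤ) (hchain : ∀ i j : Fin N, i ≤ j → e i ∣ e j)
    {k : ℕ} (hk : k ≤ N) (f g : Fin k → Fin N) :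
    (∏ i : Fin k, e (Fin.castLE hk i)) ∣ ((Matrix.diagonal e).submatrix f g).det := by
  by_cases hf : Function.Injective f
  · -- expand det as a sum over permutations
    rw [Matrix.det_apply]
    refine Finset.dvd_sum fun σ _ => ?_
    rcases Classical.em (∀ i, f (σ i) = g i) with hall | hnot
    · have : ∏ i, ((Matrix.diagonal e).submatrix f g) (σ i) i = ∏ i, e (f (σ i)) := by
        refine Finset.prod_congr rfl fun i _ => ?_
        simp [Matrix.submatrix_apply, Matrix.diagonal_apply, hall i]
      rw [this]
      have h2 : ∏ i, e (f (σ i)) = ∏ i, e (f i) := Fintype.prod_equiv σ _ _ fun i => rfl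
      rw [h2]
      rw [Units.smul_def, zsmul_eq_mul]
      exact Dvd.dvd.mul_left (prod_first_dvd e hchain hk f hf) _
    · push_neg at hnot
      obtain ⟨i, hi⟩ := hnot
      have : ∏ j, ((Matrix.diagonal e).submatrix f g) (σ j) j = 0 := by
        refine Finset.prod_eq_zero (Finset.mem_univ i) ?_
        simp [Matrix.submatrix_apply, Matrix.diagonal_apply, hi]
      rw [this, smul_zero]
      exact dvd_zero _
  · rw [Function.not_injective_iff] at hf
    obtain ⟨a, b, hab, hne⟩ := hf
    have : ((Matrix.diagonal e).submatrix f g).det = 0 := by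
      refine Matrix.det_zero_of_row_eq hne ?_
      funext j
      simp [Matrix.submatrix_apply, hab]
    simp [this]

end Chain2

lemma gcdMinors_diagonal_chain {N : ℕ} (e : Fin N → ℤ)
    (hchain : ∀ i j : Fin N, i ≤ j → e i ∣ e j) {k : ℕ} (hk : k ≤ N) :
    gcdMinors k (Matrix.diagonal e) = (∏ i : Fin k, e (Fin.castLE hk i)).natAbs := by
  refine Nat.dvd_antisymm ?_ ?_
  · have h1 : ((Matrix.diagonal e).submatrix (Fin.castLE hk) (Fin.castLE hk)).det =
        ∏ i : Fin k, e (Fin.castLE hk i) := by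
      rw [Matrix.submatrix_diagonal e (Fin.castLE hk) (Fin.castLE_injective hk),
        Matrix.det_diagonal]
      rfl
    have h2 := Finset.gcd_dvd (f := fun p : (Fin k → Fin N) × (Fin k → Fin N) =>
      (((Matrix.diagonal e).submatrix p.1 p.2).det).natAbs)
      (Finset.mem_univ (Fin.castLE hk, Fin.castLE hk))
    simp only at h2
    rw [h1] at h2
    exact h2
  · exact dvd_gcdMinors k (Matrix.diagonal e) _ (prod_first_dvd_minor e hchain hk)


lemma symplecticJ_mul_self (n : ℕ) (R : Type*) [CommRing R] :
    symplecticJ n R * symplecticJ n R = -1 := by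
  have : (-1 : Matrix (Fin n ⊕ Fin n) (Fin n ⊕ Fin n) R) = fromBlocks (-1) 0 0 (-1) := by
    rw [← Matrix.fromBlocks_one, Matrix.fromBlocks_neg]; simp
  rw [this, symplecticJ, Matrix.fromBlocks_multiply]
  congr 1 <;> simp

lemma det_symplecticJ_mul_self (n : ℕ) :
    (symplecticJ n ℤ).det * (symplecticJ n ℤ).det = 1 := by
  rw [← Matrix.det_mul, symplecticJ_mul_self, Matrix.det_neg, Matrix.det_one]
  simp only [Fintype.card_sum, Fintype.card_fin, mul_one]
  exact Even.neg_one_pow ⟨n, rfl⟩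

lemma isUnit_det_of_symplectic {n : ℕ} (σ : Matrix (Fin n ⊕ Fin n) (Fin n ⊕ Fin n) ℤ)
    (h : σᵀ * symplecticJ n ℤ * σ = symplecticJ n ℤ) : IsUnit σ.det := by
  have hdet := congrArg Matrix.det h
  rw [Matrix.det_mul, Matrix.det_mul, Matrix.det_transpose] at hdet
  have hJ : (symplecticJ n ℤ).det ≠ 0 := by
    intro h0
    have := det_symplecticJ_mul_self n
    rw [h0] at this; simp at this
  have h2 : σ.det * σ.det = 1 := by
    have : (σ.det * σ.det) * (symplecticJ n ℤ).det = 1 * (symplecticJ n ℤ).det := by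
      ring_nf; ring_nf at hdet; linarith [hdet]
    exact mul_right_cancel₀ hJ this
  exact IsUnit.of_mul_eq_one _ h2

section Reindex

variable {κ : Type*} [Fintype κ] [DecidableEq κ]

lemma gcdMinors_reindex (k : ℕ) (e : ι ≃ κ) (M : Matrix ι ι ℤ) :
    gcdMinors k (Matrix.reindex e e M) = gcdMinors k M := by
  refine Nat.dvd_antisymm ?_ ?_
  · have h : ∀ f g : Fin k → ι, ((gcdMinors k (Matrix.reindex e e M) : ℤ)) ∣
        (M.submatrix f g).det := by
      intro f g
      have : M.submatrix f g = (Matrix.reindex e e M).submatrix (e ∘ f) (e ∘ g) := by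
        ext i j; simp
      rw [this]
      exact gcdMinors_dvd k _ _ _
    simpa using dvd_gcdMinors k M _ h
  · have h : ∀ f g : Fin k → κ, ((gcdMinors k M : ℤ)) ∣
        (((Matrix.reindex e e M)).submatrix f g).det := by
      intro f g
      have : (Matrix.reindex e e M).submatrix f g =
          M.submatrix (e.symm ∘ f) (e.symm ∘ g) := by
        ext i j; simp
      rw [this]
      exact gcdMinors_dvd k _ _ _
    simpa using dvd_gcdMinors k _ _ h

lemma reindex_mul (e : ι ≃ κ) (M N : Matrix ι ι ℤ) :
    Matrix.reindex e e (M * N) = Matrix.reindex e e M * Matrix.reindex e e N := by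
  simp only [Matrix.reindex_apply]
  exact (Matrix.submatrix_mul_equiv M N _ _ _).symm

end Reindex

/-- The enumeration of `Fin n ⊕ Fin n` putting the `inr` part first, reversed. -/
def sumEquiv (n : ℕ) : (Fin n ⊕ Fin n) ≃ Fin (n + n) where
  toFun x := Sum.casesOn x (fun i => ⟨n + i.1, by have := i.2; omega⟩)
    (fun i => ⟨n - 1 - i.1, by have := i.2; omega⟩)
  invFun j := if h : (j : ℕ) < n then Sum.inr ⟨n - 1 - j.1, by omega⟩
    else Sum.inl ⟨j.1 - n, by have := j.2; omega⟩
  left_inv x := by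
    rcases x with i | i
    · have hi := i.2
      simp only []
      rw [dif_neg (by omega)]
      congr 1
      exact Fin.ext (by simp only [Fin.val_mk]; omega)
    · have hi := i.2
      simp only []
      rw [dif_pos (by omega)]
      congr 1
      exact Fin.ext (by simp only [Fin.val_mk]; omega)
  right_inv j := by
    have hj := j.2
    by_cases h : (j : ℕ) < n
    · simp only [dif_pos h]
      exact Fin.ext (by simp only [Fin.val_mk]; omega)
    · simp only [dif_neg h]
      exact Fin.ext (by simp only [Fin.val_mk]; omega)

section Main

variable {n : ℕ}

/-- From the two double coset representations, extract the integral relation. -/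
lemma exists_unimodular_rel (hn : 1 ≤ n)
    (g : Matrix (Fin n ⊕ Fin n) (Fin n ⊕ Fin n) ℚ)
    (d d' : Fin n → ℤ) (c : ℤ)
    (hdc : ∀ i, d i ∣ c) (hd'c : ∀ i, d' i ∣ c)
    (hdpos : ∀ i, 0 < d i) (hd'pos : ∀ i, 0 < d' i)
    (hd : ∃ σ σ' : Matrix (Fin n ⊕ Fin n) (Fin n ⊕ Fin n) ℤ,
      IsSymplectic σ ∧ IsSymplectic σ' ∧
      fromBlocks (diagonal fun i => (d i : ℚ)) 0 0 (diagonal fun i => (d i : ℚ)⁻¹) =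
        σ.map (Int.cast : ℤ → ℚ) * g * σ'.map (Int.cast : ℤ → ℚ))
    (hd' : ∃ σ σ' : Matrix (Fin n ⊕ Fin n) (Fin n ⊕ Fin n) ℤ,
      IsSymplectic σ ∧ IsSymplectic σ' ∧
      fromBlocks (diagonal fun i => (d' i : ℚ)) 0 0 (diagonal fun i => (d' i : ℚ)⁻¹) =
        σ.map (Int.cast : ℤ → ℚ) * g * σ'.map (Int.cast : ℤ → ℚ)) :
    ∃ U V : Matrix (Fin n ⊕ Fin n) (Fin n ⊕ Fin n) ℤ, IsUnit U.det ∧ IsUnit V.det ∧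
      diagonal (Sum.elim (fun i => c * d' i) (fun i => c / d' i)) =
        U * diagonal (Sum.elim (fun i => c * d i) (fun i => c / d i)) * V := by
  obtain ⟨σ₁, σ₂, hσ₁, hσ₂, h₁⟩ := hd
  obtain ⟨σ₃, σ₄, hσ₃, hσ₄, h₂⟩ := hd'
  have u₁ : IsUnit σ₁.det := isUnit_det_of_symplectic σ₁ hσ₁
  have u₂ : IsUnit σ₂.det := isUnit_det_of_symplectic σ₂ hσ₂
  have u₃ : IsUnit σ₃.det := isUnit_det_of_symplectic σ₃ hσ₃
  have u₄ : IsUnit σ₄.det := isUnit_det_of_symplectic σ₄ hσ₄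
  set τ₁ := σ₁⁻¹ with hτ₁
  set τ₂ := σ₂⁻¹ with hτ₂
  refine ⟨σ₃ * τ₁, τ₂ * σ₄, ?_, ?_, ?_⟩
  · rw [Matrix.det_mul]
    exact u₃.mul (Matrix.isUnit_nonsing_inv_det σ₁ u₁)
  · rw [Matrix.det_mul]
    exact (Matrix.isUnit_nonsing_inv_det σ₂ u₂).mul u₄
  · -- work over ℚ and descend
    have hcast : Function.Injective (Int.cast : ℤ → ℚ) := Int.cast_injective
    apply Matrix.map_injective hcast
    have hmapmul : ∀ M N : Matrix (Fin n ⊕ Fin n) (Fin n ⊕ Fin n) ℤ,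
        (M * N).map (Int.cast : ℤ → ℚ) =
          M.map (Int.cast : ℤ → ℚ) * N.map (Int.cast : ℤ → ℚ) := fun M N =>
      Matrix.map_mul (f := Int.castRingHom ℚ)
    -- the diagonal matrices over ℚ
    have hdiagmap : ∀ e : Fin n → ℤ, (∀ i, 0 < e i) → (∀ i, e i ∣ c) →
        (diagonal (Sum.elim (fun i => c * e i) (fun i => c / e i))).map
            (Int.cast : ℤ → ℚ) =
          (c : ℚ) • fromBlocks (diagonal fun i => (e i : ℚ)) 0 0
            (diagonal fun i => (e i : ℚ)⁻¹) := by
      intro e hepos hec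
      have hkey : ∀ i, ((c / e i : ℤ) : ℚ) = (c : ℚ) * ((e i : ℚ))⁻¹ := by
        intro i
        have hne : ((e i : ℚ)) ≠ 0 := by exact_mod_cast (hepos i).ne'
        have h0 : (c / e i) * e i = c := Int.ediv_mul_cancel (hec i)
        have hq : ((c / e i : ℤ) : ℚ) * (e i : ℚ) = (c : ℚ) := by
          exact_mod_cast congrArg (Int.cast : ℤ → ℚ) h0
        field_simp
        linarith [hq]
      rw [Matrix.fromBlocks_diagonal, Matrix.diagonal_map (by simp)]
      ext x y
      rcases x with i | i <;> rcases y with j | j <;>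
        by_cases hij : i = j <;>
        simp [Matrix.diagonal_apply, hij, hkey, Matrix.smul_apply, mul_comm]
    -- invert σ₁, σ₂ over ℚ
    have hst₁ : σ₁ * τ₁ = 1 := Matrix.mul_nonsing_inv σ₁ u₁
    have hts₁ : τ₁ * σ₁ = 1 := Matrix.nonsing_inv_mul σ₁ u₁
    have hst₂ : σ₂ * τ₂ = 1 := Matrix.mul_nonsing_inv σ₂ u₂
    have hts₂ : τ₂ * σ₂ = 1 := Matrix.nonsing_inv_mul σ₂ u₂
    set S₁ := σ₁.map (Int.cast : ℤ → ℚ)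
    set S₂ := σ₂.map (Int.cast : ℤ → ℚ)
    set S₃ := σ₃.map (Int.cast : ℤ → ℚ)
    set S₄ := σ₄.map (Int.cast : ℤ → ℚ)
    set T₁ := τ₁.map (Int.cast : ℤ → ℚ)
    set T₂ := τ₂.map (Int.cast : ℤ → ℚ)
    have e₁ : T₁ * S₁ = 1 := by rw [← hmapmul, hts₁]; simp
    have e₂ : S₂ * T₂ = 1 := by rw [← hmapmul, hst₂]; simp
    have hg : g = T₁ * (fromBlocks (diagonal fun i => (d i : ℚ)) 0 0
        (diagonal fun i => (d i : ℚ)⁻¹)) * T₂ := by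
      rw [h₁]
      have hh : T₁ * (S₁ * g * S₂) * T₂ = (T₁ * S₁) * g * (S₂ * T₂) := by
        noncomm_ring
      rw [hh, e₁, e₂, Matrix.one_mul, Matrix.mul_one]
    show (diagonal (Sum.elim (fun i => c * d' i) (fun i => c / d' i))).map
        (Int.cast : ℤ → ℚ) =
      (σ₃ * τ₁ * diagonal (Sum.elim (fun i => c * d i) (fun i => c / d i)) *
        (τ₂ * σ₄)).map (Int.cast : ℤ → ℚ)
    simp only [hmapmul]
    rw [hdiagmap d hdpos hdc, hdiagmap d' hd'pos hd'c, h₂, hg]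
    simp only [Matrix.mul_smul, Matrix.smul_mul]
    congr 1
    noncomm_ring

end Main

section ChainFun

variable {n : ℕ} (c : ℤ) (d : Fin n → ℤ)

/-- The sorted diagonal `c/dₙ, …, c/d₁, c·d₁, …, c·dₙ`. -/
def eChain : Fin (n + n) → ℤ := fun j =>
  Sum.elim (fun i => c * d i) (fun i => c / d i) ((sumEquiv n).symm j)

lemma eChain_apply_symm (j : Fin (n + n)) :
    (sumEquiv n).symm j = if h : (j : ℕ) < n then Sum.inr ⟨n - 1 - j.1, by omega⟩
      else Sum.inl ⟨j.1 - n, by have := j.2; omega⟩ := rfl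

variable (hdpos : ∀ i, 0 < d i) (hddvd : ∀ i j : Fin n, i ≤ j → d i ∣ d j)
  (hdc : ∀ i, d i ∣ c) (hcpos : 0 < c)

include hdc in
lemma cdiv_mul (i : Fin n) : c / d i * d i = c := Int.ediv_mul_cancel (hdc i)

include hdpos hdc hcpos in
lemma cdiv_pos (i : Fin n) : 0 < c / d i := by
  have h1 := cdiv_mul c d hdc i
  have h2 := hdpos i
  nlinarith [h1, h2, hcpos]

include hdpos hddvd hdc in
lemma cdiv_anti {i j : Fin n} (hij : i ≤ j) : c / d j ∣ c / d i := by
  obtain ⟨k, hk⟩ := hddvd i j hij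
  have h1 := cdiv_mul c d hdc i
  have h2 := cdiv_mul c d hdc j
  refine ⟨k, ?_⟩
  have hdi : d i ≠ 0 := (hdpos i).ne'
  have h3 : ((c / d j) * k) * d i = c := by
    rw [mul_assoc, mul_comm k (d i), ← hk, h2]
  exact mul_right_cancel₀ hdi (h1.trans h3.symm)

include hdpos hddvd hdc hcpos in
lemma eChain_chain : ∀ i j : Fin (n + n), i ≤ j → eChain c d i ∣ eChain c d j := by
  intro i j hij
  have hij' : (i : ℕ) ≤ (j : ℕ) := hij
  have hi2 := i.2
  have hj2 := j.2
  unfold eChain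
  rw [eChain_apply_symm, eChain_apply_symm]
  by_cases hi : (i : ℕ) < n <;> by_cases hj : (j : ℕ) < n
  · rw [dif_pos hi, dif_pos hj]
    simp only [Sum.elim_inr]
    exact cdiv_anti c d hdpos hddvd hdc (by simp [Fin.le_def]; omega)
  · rw [dif_pos hi, dif_neg hj]
    simp only [Sum.elim_inr, Sum.elim_inl]
    refine dvd_trans ⟨d ⟨n - 1 - i.1, by omega⟩, (cdiv_mul c d hdc _).symm⟩ ?_
    exact Dvd.intro _ rfl
  · omega
  · rw [dif_neg hi, dif_neg hj]
    simp only [Sum.elim_inl]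
    exact mul_dvd_mul_left c (hddvd _ _ (by simp [Fin.le_def]; omega))

include hdpos hdc hcpos in
lemma eChain_pos : ∀ j, 0 < eChain c d j := by
  intro j
  unfold eChain
  rw [eChain_apply_symm]
  by_cases hj : (j : ℕ) < n
  · rw [dif_pos hj]
    exact cdiv_pos c d hdpos hdc hcpos _
  · rw [dif_neg hj]
    exact mul_pos hcpos (hdpos _)

lemma eChain_at_inl (i : Fin n) : eChain c d (sumEquiv n (Sum.inl i)) = c * d i := by
  unfold eChain
  rw [Equiv.symm_apply_apply]
  simp

lemma eChain_diagonal :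
    Matrix.diagonal (eChain c d) = Matrix.reindex (sumEquiv n) (sumEquiv n)
      (Matrix.diagonal (Sum.elim (fun i => c * d i) (fun i => c / d i))) := by
  rw [Matrix.reindex_apply, Matrix.submatrix_diagonal_equiv]
  rfl

end ChainFun

lemma eq_of_prefix_prods {N : ℕ} (e e' : Fin N → ℤ)
    (hpos : ∀ j, 0 < e j) (hpos' : ∀ j, 0 < e' j)
    (h : ∀ k (hk : k ≤ N), (∏ i : Fin k, e (Fin.castLE hk i)) =
      ∏ i : Fin k, e' (Fin.castLE hk i)) : e = e' := by
  funext j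
  have hk : (j : ℕ) ≤ N := le_of_lt j.2
  have hk1 : (j : ℕ) + 1 ≤ N := j.2
  have hcast : ∀ i : Fin (j : ℕ), Fin.castLE hk1 i.castSucc = Fin.castLE hk i :=
    fun i => Fin.ext (by simp)
  have hlast : Fin.castLE hk1 (Fin.last (j : ℕ)) = j := Fin.ext (by simp)
  have hsplit : ∀ f : Fin N → ℤ, (∏ i : Fin ((j : ℕ) + 1), f (Fin.castLE hk1 i)) =
      (∏ i : Fin (j : ℕ), f (Fin.castLE hk i)) * f j := by
    intro f
    rw [Fin.prod_univ_castSucc, hlast]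
    exact congrArg (· * f j) (Finset.prod_congr rfl fun i _ => congrArg f (hcast i))
  have h1 := h ((j : ℕ) + 1) hk1
  rw [hsplit e, hsplit e', h (j : ℕ) hk] at h1
  have hne : (∏ i : Fin (j : ℕ), e' (Fin.castLE hk i)) ≠ 0 :=
    (Finset.prod_pos fun i _ => hpos' _).ne'
  exact mul_left_cancel₀ hne h1

end Aux

/-- **Uniqueness of the symplectic Smith normal form.** If two positive integral diagonal
matrices `d, d'` with `d₁ ∣ d₂ ∣ … ∣ dₙ` and `d'₁ ∣ d'₂ ∣ … ∣ d'ₙ` are such that both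
`diag(d, d⁻¹)` and `diag(d', d'⁻¹)` lie in the double coset `Sp(n,ℤ) g Sp(n,ℤ)` of a rational
symplectic matrix `g`, then `d = d'`. -/
theorem symplectic_smith_normal_form_unique {n : ℕ} (hn : 1 ≤ n)
    (g : Matrix (Fin n ⊕ Fin n) (Fin n ⊕ Fin n) ℚ) (hg : IsSymplectic g)
    (d d' : Fin n → ℤ)
    (hdpos : ∀ i, 0 < d i) (hddvd : ∀ i j : Fin n, i ≤ j → d i ∣ d j)
    (hd'pos : ∀ i, 0 < d' i) (hd'dvd : ∀ i j : Fin n, i ≤ j → d' i ∣ d' j)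
    (hd : ∃ σ σ' : Matrix (Fin n ⊕ Fin n) (Fin n ⊕ Fin n) ℤ,
      IsSymplectic σ ∧ IsSymplectic σ' ∧
      fromBlocks (diagonal fun i => (d i : ℚ)) 0 0 (diagonal fun i => (d i : ℚ)⁻¹) =
        σ.map (Int.cast : ℤ → ℚ) * g * σ'.map (Int.cast : ℤ → ℚ))
    (hd' : ∃ σ σ' : Matrix (Fin n ⊕ Fin n) (Fin n ⊕ Fin n) ℤ,
      IsSymplectic σ ∧ IsSymplectic σ' ∧
      fromBlocks (diagonal fun i => (d' i : ℚ)) 0 0 (diagonal fun i => (d' i : ℚ)⁻¹) =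
        σ.map (Int.cast : ℤ → ℚ) * g * σ'.map (Int.cast : ℤ → ℚ)) :
    d = d' := by
  classical
  classical
  set i₀ : Fin n := ⟨n - 1, by omega⟩ with hi₀
  set c : ℤ := d i₀ * d' i₀ with hc
  have hdc : ∀ i, d i ∣ c := fun i =>
    (hddvd i i₀ (by simp [Fin.le_def, hi₀]; omega)).trans ⟨d' i₀, rfl⟩
  have hd'c : ∀ i, d' i ∣ c := fun i =>
    (hd'dvd i i₀ (by simp [Fin.le_def, hi₀]; omega)).trans ⟨d i₀, mul_comm _ _⟩
  have hcpos : 0 < c := mul_pos (hdpos i₀) (hd'pos i₀)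
  obtain ⟨U, V, hU, hV, hrel⟩ :=
    exists_unimodular_rel hn g d d' c hdc hd'c hdpos hd'pos hd hd'
  set A : Matrix (Fin n ⊕ Fin n) (Fin n ⊕ Fin n) ℤ :=
    diagonal (Sum.elim (fun i => c * d i) (fun i => c / d i)) with hA
  set A' : Matrix (Fin n ⊕ Fin n) (Fin n ⊕ Fin n) ℤ :=
    diagonal (Sum.elim (fun i => c * d' i) (fun i => c / d' i)) with hA'
  -- reverse relation
  have hUinv : U⁻¹ * U = 1 := Matrix.nonsing_inv_mul U hU
  have hVinv : V * V⁻¹ = 1 := Matrix.mul_nonsing_inv V hV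
  have hrel' : A = U⁻¹ * A' * V⁻¹ := by
    rw [hrel]
    have : U⁻¹ * (U * A * V) * V⁻¹ = (U⁻¹ * U) * A * (V * V⁻¹) := by noncomm_ring
    rw [this, hUinv, hVinv, Matrix.one_mul, Matrix.mul_one]
  have hminors : ∀ k, gcdMinors k A = gcdMinors k A' := by
    intro k
    refine Nat.dvd_antisymm ?_ ?_
    · rw [hrel]; exact gcdMinors_dvd_mul_mul k A U V
    · conv_rhs => rw [hrel']
      exact gcdMinors_dvd_mul_mul k A' U⁻¹ V⁻¹
  -- pass to the chain functions on Fin (n + n)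
  set e : Fin (n + n) → ℤ := eChain c d with he
  set e' : Fin (n + n) → ℤ := eChain c d' with he'
  have hminors2 : ∀ k, gcdMinors k (Matrix.diagonal e) = gcdMinors k (Matrix.diagonal e') := by
    intro k
    rw [he, he', eChain_diagonal, eChain_diagonal, gcdMinors_reindex, gcdMinors_reindex]
    exact hminors k
  have hchain : ∀ i j : Fin (n + n), i ≤ j → e i ∣ e j :=
    eChain_chain c d hdpos hddvd hdc hcpos
  have hchain' : ∀ i j : Fin (n + n), i ≤ j → e' i ∣ e' j :=
    eChain_chain c d' hd'pos hd'dvd hd'c hcpos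
  have hpos : ∀ j, 0 < e j := eChain_pos c d hdpos hdc hcpos
  have hpos' : ∀ j, 0 < e' j := eChain_pos c d' hd'pos hd'c hcpos
  have hprods : ∀ k (hk : k ≤ n + n), (∏ i : Fin k, e (Fin.castLE hk i)) =
      ∏ i : Fin k, e' (Fin.castLE hk i) := by
    intro k hk
    have h1 := gcdMinors_diagonal_chain e hchain hk
    have h2 := gcdMinors_diagonal_chain e' hchain' hk
    have h3 : (∏ i : Fin k, e (Fin.castLE hk i)).natAbs =
        (∏ i : Fin k, e' (Fin.castLE hk i)).natAbs := by
      rw [← h1, ← h2]; exact hminors2 k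
    have hp1 : (0:ℤ) ≤ ∏ i : Fin k, e (Fin.castLE hk i) :=
      (Finset.prod_pos fun i _ => hpos _).le
    have hp2 : (0:ℤ) ≤ ∏ i : Fin k, e' (Fin.castLE hk i) :=
      (Finset.prod_pos fun i _ => hpos' _).le
    omega
  have hee : e = e' := eq_of_prefix_prods e e' hpos hpos' hprods
  funext i
  have h1 : e (sumEquiv n (Sum.inl i)) = c * d i := eChain_at_inl c d i
  have h2 : e' (sumEquiv n (Sum.inl i)) = c * d' i := eChain_at_inl c d' i
  rw [hee, h2] at h1
  exact mul_left_cancel₀ hcpos.ne' h1.symm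
end
end

section
/- Let n ≥ 1. The group Sp(n, ℤ) acts transitively on the set of primitive vectors of ℤ^{2n}: for any primitive vector v ∈ ℤ^{2n} there exists σ ∈ Sp(n, ℤ) with σ v = e₁, where e₁ is the first standard basis vector. -/
open Matrix

noncomputable section

namespace SpAux

set_option linter.unusedSectionVars false

variable {ι : Type*} [Fintype ι] [DecidableEq ι]

/-- elementary move acting as `(p q; r s)` on coordinates `i, j`. -/
def elem2 (i j : ι) (p q r s : ℤ) : Matrix ι ι ℤ :=
  1 + single i i (p - 1) + single i j q +
    single j i r + single j j (s - 1)

lemma elem2_mulVec_apply (i j : ι) (hij : i ≠ j) (p q r s : ℤ) (w : ι → ℤ) (k : ι) :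
    (elem2 i j p q r s).mulVec w k =
      if k = i then p * w i + q * w j else if k = j then r * w i + s * w j else w k := by
  simp only [elem2, add_mulVec, one_mulVec, single_mulVec, Pi.add_apply]
  rcases eq_or_ne k i with rfl | hki
  · simp [Function.update, hij, hij.symm]
    ring
  · rcases eq_or_ne k j with rfl | hkj
    · simp [Function.update, hij, hij.symm, hki]
      ring
    · simp [Function.update, hki, hkj]

lemma eq_one_of_forall_mulVec {M : Matrix ι ι ℤ} (h : ∀ w, M.mulVec w = w) : M = 1 := by
  ext i j
  have := congrFun (h (Pi.single j 1)) i
  simp only [mulVec_single_one, col_apply] at this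
  simp [this, Matrix.one_apply, Pi.single_apply]

lemma elem2_mul_elem2 (i j : ι) (hij : i ≠ j) {p q r s : ℤ} (h : p * s - q * r = 1) :
    elem2 i j p q r s * elem2 i j s (-q) (-r) p = 1 := by
  apply eq_one_of_forall_mulVec
  intro w
  funext k
  rw [← mulVec_mulVec]
  rcases eq_or_ne k i with rfl | hki
  · rw [elem2_mulVec_apply _ _ hij, if_pos rfl,
      elem2_mulVec_apply _ _ hij, if_pos rfl,
      elem2_mulVec_apply _ _ hij, if_neg hij.symm, if_pos rfl]
    linear_combination w k * h
  · rcases eq_or_ne k j with rfl | hkj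
    · rw [elem2_mulVec_apply _ _ hij, if_neg hij.symm, if_pos rfl,
        elem2_mulVec_apply _ _ hij, if_pos rfl,
        elem2_mulVec_apply _ _ hij, if_neg hij.symm, if_pos rfl]
      linear_combination w k * h
    · rw [elem2_mulVec_apply _ _ hij, if_neg hki, if_neg hkj,
        elem2_mulVec_apply _ _ hij, if_neg hki, if_neg hkj]

lemma bezout (x y : ℤ) :
    ∃ p q r s : ℤ, p * s - q * r = 1 ∧ p * x + q * y = gcd x y ∧ r * x + s * y = 0 := by
  by_cases h0 : x = 0 ∧ y = 0
  · exact ⟨1, 0, 0, 1, by ring, by simp [h0.1, h0.2], by simp [h0.1, h0.2]⟩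
  · set G : ℤ := (Int.gcd x y : ℤ) with hG
    have hGne : G ≠ 0 := by
      simp only [hG, ne_eq, Int.natCast_eq_zero, Int.gcd_eq_zero_iff]
      tauto
    obtain ⟨x', hx'⟩ : G ∣ x := Int.gcd_dvd_left _ _
    obtain ⟨y', hy'⟩ : G ∣ y := Int.gcd_dvd_right _ _
    have hbez : G = x * Int.gcdA x y + y * Int.gcdB x y := Int.gcd_eq_gcd_ab x y
    have key : x' * Int.gcdA x y + y' * Int.gcdB x y = 1 := by
      apply mul_left_cancel₀ hGne
      rw [mul_one]
      calc G * (x' * Int.gcdA x y + y' * Int.gcdB x y)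
          = (G * x') * Int.gcdA x y + (G * y') * Int.gcdB x y := by ring
        _ = G := by rw [← hx', ← hy', ← hbez]
    refine ⟨Int.gcdA x y, Int.gcdB x y, -y', x', ?_, ?_, ?_⟩
    · linarith [key]
    · have : (gcd x y : ℤ) = G := by rw [← Int.coe_gcd]
      rw [this, hbez]; ring
    · rw [hx', hy']; ring

lemma gcd_reduce (i₀ : ι) (a : ι → ℤ) (t : Finset ι) (ht : i₀ ∉ t) :
    ∃ U V : Matrix ι ι ℤ, U * V = 1 ∧ V * U = 1 ∧
      (U.mulVec a) i₀ = (insert i₀ t).gcd a ∧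
      (∀ i ∈ t, (U.mulVec a) i = 0) ∧
      (∀ i, i ≠ i₀ → i ∉ t → (U.mulVec a) i = a i) := by
  induction t using Finset.induction_on with
  | empty =>
      refine ⟨diagonal (fun i => if i = i₀ then (if 0 ≤ a i₀ then 1 else -1) else 1),
        diagonal (fun i => if i = i₀ then (if 0 ≤ a i₀ then 1 else -1) else 1), ?_, ?_, ?_, ?_, ?_⟩
      · rw [diagonal_mul_diagonal]
        have h1 : ∀ i : ι, (if i = i₀ then (if 0 ≤ a i₀ then (1:ℤ) else -1) else 1) *
            (if i = i₀ then (if 0 ≤ a i₀ then (1:ℤ) else -1) else 1) = 1 := by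
          intro i; by_cases h : i = i₀ <;> by_cases h2 : 0 ≤ a i₀ <;> simp [h, h2]
        simp only [h1, diagonal_one]
      · rw [diagonal_mul_diagonal]
        have h1 : ∀ i : ι, (if i = i₀ then (if 0 ≤ a i₀ then (1:ℤ) else -1) else 1) *
            (if i = i₀ then (if 0 ≤ a i₀ then (1:ℤ) else -1) else 1) = 1 := by
          intro i; by_cases h : i = i₀ <;> by_cases h2 : 0 ≤ a i₀ <;> simp [h, h2]
        simp only [h1, diagonal_one]
      · rw [mulVec_diagonal, LawfulSingleton.insert_empty_eq, Finset.gcd_singleton, ← Int.abs_eq_normalize]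
        by_cases h2 : 0 ≤ a i₀
        · simp [h2, abs_of_nonneg h2]
        · simp [h2, abs_of_neg (lt_of_not_ge h2)]
      · intro i hi; simp at hi
      · intro i hi _; rw [mulVec_diagonal, if_neg hi, one_mul]
  | insert j t' hj ih =>
      have hji₀ : j ≠ i₀ := by rintro rfl; exact ht (Finset.mem_insert_self _ _)
      have hi₀t' : i₀ ∉ t' := fun h => ht (Finset.mem_insert_of_mem h)
      obtain ⟨U, V, hUV, hVU, hval, hzero, hkeep⟩ := ih hi₀t'
      set w := U.mulVec a with hw
      obtain ⟨p, q, r, s, hdet, hpq, hrs⟩ := bezout (w i₀) (w j)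
      refine ⟨elem2 i₀ j p q r s * U, V * elem2 i₀ j s (-q) (-r) p, ?_, ?_, ?_, ?_, ?_⟩
      · calc elem2 i₀ j p q r s * U * (V * elem2 i₀ j s (-q) (-r) p)
            = elem2 i₀ j p q r s * (U * V) * elem2 i₀ j s (-q) (-r) p := by
              noncomm_ring
          _ = 1 := by rw [hUV, mul_one, elem2_mul_elem2 _ _ hji₀.symm hdet]
      · have hdet2 : s * p - (-q) * (-r) = 1 := by linarith
        have h2 := elem2_mul_elem2 i₀ j hji₀.symm hdet2
        rw [neg_neg, neg_neg] at h2
        calc V * elem2 i₀ j s (-q) (-r) p * (elem2 i₀ j p q r s * U)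
            = V * (elem2 i₀ j s (-q) (-r) p * elem2 i₀ j p q r s) * U := by noncomm_ring
          _ = 1 := by rw [h2, mul_one, hVU]
      · rw [← mulVec_mulVec, ← hw, elem2_mulVec_apply _ _ hji₀.symm, if_pos rfl]
        rw [Finset.insert_comm, Finset.gcd_insert, ← hval]
        rw [hpq, gcd_comm]
        congr 1
        exact hkeep j hji₀ hj
      · intro i hi
        rw [← mulVec_mulVec, ← hw, elem2_mulVec_apply _ _ hji₀.symm]
        rcases Finset.mem_insert.mp hi with rfl | hit'
        · rw [if_neg hji₀, if_pos rfl, hrs]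
        · have hii₀ : i ≠ i₀ := by rintro rfl; exact hi₀t' hit'
          have hij : i ≠ j := by rintro rfl; exact hj hit'
          rw [if_neg hii₀, if_neg hij]
          exact hzero i hit'
      · intro i hii₀ hi
        have hij : i ≠ j := by rintro rfl; exact hi (Finset.mem_insert_self _ _)
        have hit' : i ∉ t' := fun h => hi (Finset.mem_insert_of_mem h)
        rw [← mulVec_mulVec, ← hw, elem2_mulVec_apply _ _ hji₀.symm, if_neg hii₀, if_neg hij]
        exact hkeep i hii₀ hit'

lemma gcd_normal (i₀ : ι) (a : ι → ℤ) :
    ∃ U V : Matrix ι ι ℤ, U * V = 1 ∧ V * U = 1 ∧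
      U.mulVec a = Pi.single i₀ (Finset.univ.gcd a) := by
  obtain ⟨U, V, h1, h2, h3, h4, h5⟩ :=
    gcd_reduce i₀ a (Finset.univ.erase i₀) (Finset.notMem_erase _ _)
  refine ⟨U, V, h1, h2, funext fun i => ?_⟩
  rcases eq_or_ne i i₀ with rfl | hii₀
  · rw [h3, Finset.insert_erase (Finset.mem_univ i), Pi.single_eq_same]
  · rw [h4 i (Finset.mem_erase.mpr ⟨hii₀, Finset.mem_univ i⟩), Pi.single_eq_of_ne hii₀]

/-! ### `c • 1 + d • E` block algebra -/

def am (i₀ : ι) (c d : ℤ) : Matrix ι ι ℤ := c • 1 + d • single i₀ i₀ 1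

lemma stdBasisMatrix_transpose' (i₀ : ι) (d : ℤ) :
    (single i₀ i₀ d)ᵀ = single i₀ i₀ d := by
  ext k l
  simp [single, transpose_apply, and_comm]

lemma am_transpose (i₀ : ι) (c d : ℤ) : (am i₀ c d)ᵀ = am i₀ c d := by
  simp [am, transpose_add, transpose_smul, transpose_one, stdBasisMatrix_transpose']

lemma am_mul (i₀ : ι) (c d c' d' : ℤ) :
    am i₀ c d * am i₀ c' d' = am i₀ (c * c') (c * d' + d * c' + d * d') := by
  simp only [am, add_mul, mul_add, Matrix.smul_mul, Matrix.mul_smul, one_mul, mul_one,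
    single_mul_single_same, smul_smul, add_smul]
  module

lemma am_sub (i₀ : ι) (c d c' d' : ℤ) :
    am i₀ c d - am i₀ c' d' = am i₀ (c - c') (d - d') := by
  simp only [am, sub_smul]
  module

lemma am_one (i₀ : ι) : am i₀ 1 0 = 1 := by simp [am]

lemma am_congr (i₀ : ι) {c d c' d' : ℤ} (hc : c = c') (hd : d = d') :
    am i₀ c d = am i₀ c' d' := by rw [hc, hd]

lemma am_mulVec (i₀ : ι) (c d : ℤ) (w : ι → ℤ) (k : ι) :
    (am i₀ c d).mulVec w k = c * w k + (if k = i₀ then d * w i₀ else 0) := by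
  simp only [am, add_mulVec, smul_mulVec, one_mulVec, single_mulVec,
    Pi.add_apply, Pi.smul_apply, smul_eq_mul, one_mul]
  rcases eq_or_ne k i₀ with rfl | hk
  · simp [Function.update]
  · simp [Function.update, hk]

/-! ### symplectic lemmas -/

variable {n : ℕ}

lemma isSymplectic_mul {g h : Matrix (Fin n ⊕ Fin n) (Fin n ⊕ Fin n) ℤ}
    (hg : IsSymplectic g) (hh : IsSymplectic h) : IsSymplectic (g * h) := by
  unfold IsSymplectic at *
  rw [transpose_mul]
  calc hᵀ * gᵀ * symplecticJ n ℤ * (g * h)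
      = hᵀ * (gᵀ * symplecticJ n ℤ * g) * h := by noncomm_ring
    _ = symplecticJ n ℤ := by rw [hg, hh]

lemma isSymplectic_fromBlocks {A B C D : Matrix (Fin n) (Fin n) ℤ}
    (h1 : Aᵀ * C = Cᵀ * A) (h2 : Aᵀ * D - Cᵀ * B = 1) (h3 : Bᵀ * D = Dᵀ * B) :
    IsSymplectic (fromBlocks A B C D) := by
  unfold IsSymplectic symplecticJ
  rw [fromBlocks_transpose, fromBlocks_multiply, fromBlocks_multiply, fromBlocks_inj]
  have h2' : Dᵀ * A - Bᵀ * C = 1 := by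
    have := congrArg Matrix.transpose h2
    simpa [transpose_sub, transpose_mul, transpose_one] using this
  refine ⟨?_, ?_, ?_, ?_⟩
  · simp only [Matrix.mul_zero, Matrix.mul_one, Matrix.mul_neg, zero_add, add_zero, neg_mul,
      neg_one_smul]
    rw [h1, neg_add_cancel]
  · simp only [Matrix.mul_zero, Matrix.mul_one, Matrix.mul_neg, zero_add, add_zero, neg_mul,
      neg_one_smul]
    rw [← sub_eq_neg_add, h2]
  · simp only [Matrix.mul_zero, Matrix.mul_one, Matrix.mul_neg, zero_add, add_zero, neg_mul,
      neg_one_smul]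
    rw [← sub_eq_neg_add, ← neg_sub (Dᵀ * A) (Bᵀ * C), h2']
  · simp only [Matrix.mul_zero, Matrix.mul_one, Matrix.mul_neg, zero_add, add_zero, neg_mul,
      neg_one_smul]
    rw [h3, neg_add_cancel]

lemma symplecticJ_mul_self : symplecticJ n ℤ * symplecticJ n ℤ = -1 := by
  unfold symplecticJ
  rw [fromBlocks_multiply]
  simp only [Matrix.mul_zero, Matrix.mul_one, Matrix.mul_neg, Matrix.zero_mul, Matrix.one_mul,
    Matrix.neg_mul, zero_add, add_zero, neg_zero]
  rw [← fromBlocks_one, fromBlocks_neg]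
  simp

lemma isSymplectic_inv {g : Matrix (Fin n ⊕ Fin n) (Fin n ⊕ Fin n) ℤ}
    (h : IsSymplectic g) : ∃ τ, τ * g = 1 := by
  refine ⟨-(symplecticJ n ℤ * gᵀ * symplecticJ n ℤ), ?_⟩
  calc -(symplecticJ n ℤ * gᵀ * symplecticJ n ℤ) * g
      = -(symplecticJ n ℤ * (gᵀ * symplecticJ n ℤ * g)) := by noncomm_ring
    _ = -(symplecticJ n ℤ * symplecticJ n ℤ) := by rw [h]
    _ = 1 := by rw [symplecticJ_mul_self, neg_neg]

lemma dvd_mulVec {c : ℤ} {κ : Type*} [Fintype κ] (τ : Matrix κ κ ℤ) (w : κ → ℤ)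
    (h : ∀ j, c ∣ w j) (i : κ) : c ∣ τ.mulVec w i := by
  refine Finset.dvd_sum fun j _ => ?_
  exact (h j).mul_left _

end SpAux

open SpAux

/-- **`Sp(n, ℤ)` acts transitively on primitive vectors of `ℤ^{2n}`.**
For any primitive vector `v` (nonzero, with coordinates of gcd `1`) there is
`σ ∈ Sp(n, ℤ)` with `σ v = e₁`. -/
theorem sp_transitive_on_primitive_vectors {n : ℕ} (hn : 1 ≤ n)
    (v : Fin n ⊕ Fin n → ℤ) (hv0 : v ≠ 0) (hv : Finset.univ.gcd v = 1) :
    ∃ σ : Matrix (Fin n ⊕ Fin n) (Fin n ⊕ Fin n) ℤ,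
      IsSymplectic σ ∧ σ.mulVec v = Pi.single (Sum.inl ⟨0, hn⟩) 1 := by
  classical
  set i₀ : Fin n := ⟨0, hn⟩ with hi₀
  set a : Fin n → ℤ := v ∘ Sum.inl with ha
  set b : Fin n → ℤ := v ∘ Sum.inr with hb
  have hv' : v = Sum.elim a b := by funext k; cases k <;> rfl
  -- step 1 : gcd normal form on the `a`-part
  obtain ⟨U₁, V₁, hUV₁, hVU₁, hU₁a⟩ := gcd_normal i₀ a
  set d : ℤ := Finset.univ.gcd a with hd
  set b₁ : Fin n → ℤ := V₁ᵀ.mulVec b with hb₁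
  set σ₁ : Matrix (Fin n ⊕ Fin n) (Fin n ⊕ Fin n) ℤ := fromBlocks U₁ 0 0 V₁ᵀ with hσ₁def
  have hσ₁ : IsSymplectic σ₁ := by
    apply isSymplectic_fromBlocks
    · simp
    · rw [← transpose_mul, hVU₁, transpose_one]
      simp
    · simp
  have hw₁ : σ₁.mulVec v = Sum.elim (Pi.single i₀ d) b₁ := by
    rw [hv', hσ₁def, fromBlocks_mulVec]
    simp only [Sum.elim_comp_inl, Sum.elim_comp_inr, zero_mulVec, add_zero, zero_add, hU₁a]
    rfl
  -- step 2 : Euclid in the first symplectic plane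
  obtain ⟨p, q, r, s, hdet, hpq, hrs⟩ := bezout d (b₁ i₀)
  set g : ℤ := gcd d (b₁ i₀) with hg
  set σ₂ : Matrix (Fin n ⊕ Fin n) (Fin n ⊕ Fin n) ℤ :=
    fromBlocks (am i₀ 1 (p-1)) (am i₀ 0 q) (am i₀ 0 r) (am i₀ 1 (s-1)) with hσ₂def
  have hσ₂ : IsSymplectic σ₂ := by
    apply isSymplectic_fromBlocks
    · rw [am_transpose, am_transpose, am_mul, am_mul]
      exact am_congr _ (by ring) (by ring)
    · rw [am_transpose, am_transpose, am_mul, am_mul, am_sub, ← am_one i₀]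
      exact am_congr _ (by ring) (by linear_combination hdet)
    · rw [am_transpose, am_transpose, am_mul, am_mul]
      exact am_congr _ (by ring) (by ring)
  set b₂ : Fin n → ℤ := fun k => if k = i₀ then 0 else b₁ k with hb₂
  have hw₂ : σ₂.mulVec (Sum.elim (Pi.single i₀ d) b₁) = Sum.elim (Pi.single i₀ g) b₂ := by
    rw [hσ₂def, fromBlocks_mulVec]
    simp only [Sum.elim_comp_inl, Sum.elim_comp_inr]
    funext k
    cases k with
    | inl k =>
      simp only [Sum.elim_inl, Pi.add_apply]
      rw [am_mulVec, am_mulVec]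
      rcases eq_or_ne k i₀ with rfl | hk
      · simp only [Pi.single_eq_same, eq_self_iff_true, if_true]
        linear_combination hpq
      · simp [Pi.single_eq_of_ne hk, hk]
    | inr k =>
      simp only [Sum.elim_inr, Pi.add_apply]
      rw [am_mulVec, am_mulVec]
      rcases eq_or_ne k i₀ with rfl | hk
      · simp only [Pi.single_eq_same, eq_self_iff_true, if_true, hb₂]
        linear_combination hrs
      · simp [Pi.single_eq_of_ne hk, hk, hb₂]
  -- step 3 : partial swap to collect everything in the `a`-part
  set σ₃ : Matrix (Fin n ⊕ Fin n) (Fin n ⊕ Fin n) ℤ :=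
    fromBlocks (am i₀ 0 1) (am i₀ 1 (-1)) (am i₀ (-1) 1) (am i₀ 0 1) with hσ₃def
  have hσ₃ : IsSymplectic σ₃ := by
    apply isSymplectic_fromBlocks
    · rw [am_transpose, am_transpose, am_mul, am_mul]
      exact am_congr _ (by ring) (by ring)
    · rw [am_transpose, am_transpose, am_mul, am_mul, am_sub, ← am_one i₀]
      exact am_congr _ (by ring) (by ring)
    · rw [am_transpose, am_transpose, am_mul, am_mul]
      exact am_congr _ (by ring) (by ring)
  set a₃ : Fin n → ℤ := fun k => if k = i₀ then g else b₁ k with ha₃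
  have hw₃ : σ₃.mulVec (Sum.elim (Pi.single i₀ g) b₂) = Sum.elim a₃ 0 := by
    rw [hσ₃def, fromBlocks_mulVec]
    simp only [Sum.elim_comp_inl, Sum.elim_comp_inr]
    funext k
    cases k with
    | inl k =>
      simp only [Sum.elim_inl, Pi.add_apply]
      rw [am_mulVec, am_mulVec]
      rcases eq_or_ne k i₀ with rfl | hk
      · simp [hb₂, ha₃]
      · simp [Pi.single_eq_of_ne hk, hk, hb₂, ha₃]
    | inr k =>
      simp only [Sum.elim_inr, Pi.add_apply]
      rw [am_mulVec, am_mulVec]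
      rcases eq_or_ne k i₀ with rfl | hk
      · simp [hb₂]
      · simp [Pi.single_eq_of_ne hk, hk, hb₂]
  set σ' : Matrix (Fin n ⊕ Fin n) (Fin n ⊕ Fin n) ℤ := σ₃ * (σ₂ * σ₁) with hσ'def
  have hσ' : IsSymplectic σ' := isSymplectic_mul hσ₃ (isSymplectic_mul hσ₂ hσ₁)
  have hchain : σ'.mulVec v = Sum.elim a₃ 0 := by
    rw [hσ'def, ← mulVec_mulVec, ← mulVec_mulVec, hw₁, hw₂, hw₃]
  -- the reduced `a`-part is still primitive
  obtain ⟨τ, hτ⟩ := isSymplectic_inv hσ'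
  have hvw : v = τ.mulVec (Sum.elim a₃ 0) := by
    rw [← hchain, mulVec_mulVec, hτ, one_mulVec]
  have hdvd : Finset.univ.gcd a₃ ∣ 1 := by
    rw [← hv]
    refine Finset.dvd_gcd fun i _ => ?_
    rw [hvw]
    refine dvd_mulVec τ _ (fun j => ?_) i
    cases j with
    | inl k => exact Finset.gcd_dvd (Finset.mem_univ k)
    | inr k => exact dvd_zero _
  have hgcd3 : Finset.univ.gcd a₃ = 1 := by
    have hnn : 0 ≤ Finset.univ.gcd a₃ :=
      Int.nonneg_of_normalize_eq_self Finset.normalize_gcd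
    rcases Int.isUnit_iff.mp (isUnit_of_dvd_one hdvd) with h | h
    · exact h
    · omega
  -- step 4 : final gcd normal form
  obtain ⟨U₂, V₂, hUV₂, hVU₂, hU₂a⟩ := gcd_normal i₀ a₃
  set σ₄ : Matrix (Fin n ⊕ Fin n) (Fin n ⊕ Fin n) ℤ := fromBlocks U₂ 0 0 V₂ᵀ with hσ₄def
  have hσ₄ : IsSymplectic σ₄ := by
    apply isSymplectic_fromBlocks
    · simp
    · rw [← transpose_mul, hVU₂, transpose_one]
      simp
    · simp
  refine ⟨σ₄ * σ', isSymplectic_mul hσ₄ hσ', ?_⟩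
  rw [← mulVec_mulVec, hchain, hσ₄def, fromBlocks_mulVec]
  simp only [Sum.elim_comp_inl, Sum.elim_comp_inr, zero_mulVec, mulVec_zero, add_zero, hU₂a, hgcd3]
  funext k
  cases k with
  | inl k =>
      simp only [Sum.elim_inl, Pi.single_apply, Sum.inl.injEq]
  | inr k =>
      simp [Pi.single_apply]

end
end

section
/- Let g be a k×k integral matrix whose coefficients have greatest common divisor equal to 1. Then there exists a primitive vector v ∈ ℤ^k such that gv is also a primitive vector of ℤ^k. -/
open Matrix

lemma int_finset_gcd_eq_one_of_dvd_one {β : Type*} {s : Finset β} {f : β → ℤ}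
    (h : s.gcd f ∣ 1) : s.gcd f = 1 := by
  have hnn : 0 ≤ s.gcd f :=
    Int.nonneg_of_normalize_eq_self (Finset.normalize_gcd (s := s) (f := f))
  rcases Int.isUnit_iff.mp (isUnit_of_dvd_one h) with h1 | h1
  · exact h1
  · omega

lemma gcd_dvd_repr {k : ℕ} (b : Module.Basis (Fin k) ℤ (Fin k → ℤ)) (y : Fin k → ℤ) (i : Fin k) :
    (Finset.univ.gcd y : ℤ) ∣ b.repr y i := by
  have hy : b.repr y i = ∑ p : Fin k, y p * b.repr (Pi.single p (1:ℤ)) i := by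
    conv_lhs => rw [show y = ∑ p : Fin k, y p • Pi.single p (1:ℤ) by
      ext q; simp [Pi.single_apply, eq_comm]]
    rw [map_sum, Finsupp.coe_finset_sum, Finset.sum_apply]
    refine Finset.sum_congr rfl fun p _ => ?_
    rw [_root_.map_smul]; rfl
  rw [hy]
  exact Finset.dvd_sum fun p _ =>
    Dvd.dvd.mul_right (Finset.gcd_dvd (Finset.mem_univ p)) _

/-- If the coefficients of an integral `k × k` matrix `g` have gcd `1`, then there is a
primitive vector `v ∈ ℤ^k` (nonzero, coordinates of gcd `1`) such that `g v` is also
primitive. -/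
theorem exists_primitive_vector_map_primitive {k : ℕ}
    (g : Matrix (Fin k) (Fin k) ℤ)
    (hg : (Finset.univ : Finset (Fin k × Fin k)).gcd (fun p => g p.1 p.2) = 1) :
    ∃ v : Fin k → ℤ, v ≠ 0 ∧ Finset.univ.gcd v = 1 ∧
      g.mulVec v ≠ 0 ∧ Finset.univ.gcd (g.mulVec v) = 1 := by
  classical
  set N : Submodule ℤ (Fin k → ℤ) := LinearMap.range g.mulVecLin with hNdef
  obtain ⟨n, snf⟩ := N.smithNormalForm (Pi.basisFun ℤ (Fin k))
  -- every coordinate of every element of N is divisible by gcd of the a's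
  have hN : ∀ y ∈ N, ∀ p, (Finset.univ.gcd snf.a : ℤ) ∣ y p := by
    intro y hy p
    have h1 : (⟨y, hy⟩ : N) = ∑ i, snf.bN.repr ⟨y, hy⟩ i • snf.bN i :=
      (snf.bN.sum_repr _).symm
    have h2 : y = ∑ i, snf.bN.repr ⟨y, hy⟩ i • (snf.a i • snf.bM (snf.f i)) := by
      have := congrArg (Subtype.val) h1
      rw [Submodule.coe_sum] at this
      simp only [Submodule.coe_smul, snf.snf] at this
      exact this
    have h3 := congrFun h2 p
    rw [h3]
    simp only [Finset.sum_apply, Pi.smul_apply, smul_eq_mul]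
    exact Finset.dvd_sum fun i _ =>
      Dvd.dvd.mul_left (Dvd.dvd.mul_right (Finset.gcd_dvd (Finset.mem_univ i)) _) _
  -- hence gcd of the a's divides 1
  have hd1 : (Finset.univ.gcd snf.a : ℤ) ∣ 1 := by
    rw [← hg]
    refine Finset.dvd_gcd fun pq _ => ?_
    have hmem : g.mulVec (Pi.single pq.2 1) ∈ N := ⟨Pi.single pq.2 1, rfl⟩
    have := hN _ hmem pq.1
    simpa [mulVec_single] using this
  -- the candidate image vector
  set x : Fin k → ℤ := ∑ i, snf.a i • (snf.bM (snf.f i)) with hxdef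
  have hxN : x ∈ N := by
    have hx0 : x = ((∑ i, snf.bN i : N) : Fin k → ℤ) := by
      rw [hxdef]
      simp [snf.snf]
    rw [hx0]
    exact (∑ i, snf.bN i).2
  have hxrepr : ∀ i, snf.bM.repr x (snf.f i) = snf.a i := by
    intro i
    rw [hxdef, map_sum, Finsupp.coe_finset_sum, Finset.sum_apply]
    simp only [_root_.map_smul, Module.Basis.repr_self, Finsupp.smul_single, smul_eq_mul, mul_one,
      Finsupp.single_apply, snf.f.injective.eq_iff]
    simp
  have hgcdx : Finset.univ.gcd x = 1 := by
    apply int_finset_gcd_eq_one_of_dvd_one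
    refine dvd_trans (Finset.dvd_gcd fun i _ => ?_) hd1
    rw [← hxrepr i]
    exact gcd_dvd_repr snf.bM x (snf.f i)
  obtain ⟨v, hv⟩ := hxN
  have hv' : g.mulVec v = x := hv
  have hxne : x ≠ 0 := by
    intro h0
    rw [h0] at hgcdx
    have : (Finset.univ.gcd (0 : Fin k → ℤ)) = 0 :=
      Finset.gcd_eq_zero_iff.mpr fun _ _ => rfl
    omega
  have hgcdv : Finset.univ.gcd v = 1 := by
    apply int_finset_gcd_eq_one_of_dvd_one
    rw [← hgcdx]
    refine Finset.dvd_gcd fun p _ => ?_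
    rw [← hv']
    simp only [mulVec, dotProduct]
    exact Finset.dvd_sum fun q _ =>
      Dvd.dvd.mul_left (Finset.gcd_dvd (Finset.mem_univ q)) _
  refine ⟨v, ?_, hgcdv, ?_, by rw [hv']; exact hgcdx⟩
  · intro h0; apply hxne; rw [← hv', h0]; simp
  · rw [hv']; exact hxne
end

section
/- Let n ≥ 1. The group Sp(n, ℤ), embedded diagonally, is dense in the compact group Sp(n, ẑ), where ẑ = ∏_p ℤ_p is the profinite completion of ℤ (the product over all primes p of the rings ℤ_p with the product topology). -/
open Matrix

noncomputable section

instance (p : Nat.Primes) : Fact (p : ℕ).Prime := ⟨p.2⟩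

/-- The profinite completion `ẑ = ∏_p ℤ_p` of `ℤ`, as the product over all primes of the
rings of `p`-adic integers, with the product topology. -/
abbrev ZHat : Type := (p : Nat.Primes) → ℤ_[(p : ℕ)]

/-- The diagonal embedding `ℤ → ẑ`. -/
def intToZHat (m : ℤ) : ZHat := fun p => (m : ℤ_[(p : ℕ)])

namespace SpDense

variable {n : ℕ} {R S : Type*} [CommRing R] [CommRing S]

/-- standard basis vector at `inl j` -/
def eV (j : Fin n) : (Fin n ⊕ Fin n) → R := fun x => if x = Sum.inl j then 1 else 0

/-- standard basis vector at `inr j` -/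
def fV (j : Fin n) : (Fin n ⊕ Fin n) → R := fun x => if x = Sum.inr j then 1 else 0

@[simp] lemma eV_inl (j i : Fin n) : (eV j (Sum.inl i) : R) = if i = j then 1 else 0 := by
  simp [eV]
@[simp] lemma eV_inr (j i : Fin n) : (eV j (Sum.inr i) : R) = 0 := by simp [eV]
@[simp] lemma fV_inl (j i : Fin n) : (fV j (Sum.inl i) : R) = 0 := by simp [fV]
@[simp] lemma fV_inr (j i : Fin n) : (fV j (Sum.inr i) : R) = if i = j then 1 else 0 := by
  simp [fV]

/-- the symplectic pairing -/
def om (x y : (Fin n ⊕ Fin n) → R) : R := x ⬝ᵥ (symplecticJ n R *ᵥ y)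

lemma mulVec_J (y : (Fin n ⊕ Fin n) → R) :
    symplecticJ n R *ᵥ y
      = Sum.elim (fun i => y (Sum.inr i)) (fun i => -y (Sum.inl i)) := by
  funext x
  cases x with
  | inl i =>
      simp [symplecticJ, mulVec, dotProduct, Fintype.sum_sum_type, one_apply]
  | inr i =>
      simp [symplecticJ, mulVec, dotProduct, Fintype.sum_sum_type, one_apply]

lemma om_eq (x y : (Fin n ⊕ Fin n) → R) :
    om x y = ∑ i : Fin n,
      (x (Sum.inl i) * y (Sum.inr i) - x (Sum.inr i) * y (Sum.inl i)) := by
  simp [om, mulVec_J, dotProduct, Fintype.sum_sum_type, mul_neg,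
    Finset.sum_sub_distrib]
  ring

lemma om_self (x : (Fin n ⊕ Fin n) → R) : om x x = 0 := by
  simp [om_eq, mul_comm]

lemma om_add_right (x u z : (Fin n ⊕ Fin n) → R) :
    om x (u + z) = om x u + om x z := by
  simp [om, mulVec_add, dotProduct_add]

lemma om_eV (x : (Fin n ⊕ Fin n) → R) (j : Fin n) : om x (eV j) = -x (Sum.inr j) := by
  rw [om_eq]
  rw [Finset.sum_eq_single j] <;> simp +contextual

lemma om_fV (x : (Fin n ⊕ Fin n) → R) (j : Fin n) : om x (fV j) = x (Sum.inl j) := by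
  rw [om_eq]
  rw [Finset.sum_eq_single j] <;> simp +contextual

lemma eV_om (x : (Fin n ⊕ Fin n) → R) (j : Fin n) : om (eV j) x = x (Sum.inr j) := by
  rw [om_eq]
  rw [Finset.sum_eq_single j] <;> simp +contextual

lemma fV_om (x : (Fin n ⊕ Fin n) → R) (j : Fin n) : om (fV j) x = -x (Sum.inl j) := by
  rw [om_eq]
  rw [Finset.sum_eq_single j] <;> simp +contextual

lemma om_map (f : R →+* S) (x y : (Fin n ⊕ Fin n) → R) :
    f (om x y) = om (fun i => f (x i)) (fun i => f (y i)) := by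
  simp [om_eq, map_sum, map_sub, _root_.map_mul]

end SpDense

namespace SpDense

variable {n : ℕ} {R S : Type*} [CommRing R] [CommRing S]

/-- symplectic transvection -/
def Tv (v : (Fin n ⊕ Fin n) → R) (c : R) : Matrix (Fin n ⊕ Fin n) (Fin n ⊕ Fin n) R :=
  1 + vecMulVec (c • v) (symplecticJ n R *ᵥ v)

lemma vecMulVec_mulVec (v w x : (Fin n ⊕ Fin n) → R) :
    vecMulVec v w *ᵥ x = (w ⬝ᵥ x) • v := by
  funext i
  simp [mulVec, vecMulVec_apply, dotProduct, Finset.mul_sum, Finset.sum_mul,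
    mul_add, add_mul, mul_assoc, mul_comm, mul_left_comm]

lemma mul_vecMulVec (A : Matrix (Fin n ⊕ Fin n) (Fin n ⊕ Fin n) R)
    (v w : (Fin n ⊕ Fin n) → R) : A * vecMulVec v w = vecMulVec (A *ᵥ v) w := by
  ext i j
  simp [mul_apply, vecMulVec_apply, mulVec, dotProduct, Finset.sum_mul, mul_add,
    add_mul, mul_assoc]

lemma vecMulVec_mul (v w : (Fin n ⊕ Fin n) → R)
    (A : Matrix (Fin n ⊕ Fin n) (Fin n ⊕ Fin n) R) :
    vecMulVec v w * A = vecMulVec v (w ᵥ* A) := by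
  ext i j
  simp [mul_apply, vecMulVec_apply, vecMul, dotProduct, Finset.mul_sum, mul_add,
    add_mul, mul_assoc]

lemma vecMulVec_mul_vecMulVec (a b c d : (Fin n ⊕ Fin n) → R) :
    vecMulVec a b * vecMulVec c d = (b ⬝ᵥ c) • vecMulVec a d := by
  ext i j
  simp [mul_apply, vecMulVec_apply, dotProduct, Finset.sum_mul, Finset.mul_sum,
    mul_add, add_mul, mul_assoc, mul_comm, mul_left_comm]

lemma transpose_vecMulVec (v w : (Fin n ⊕ Fin n) → R) :
    (vecMulVec v w)ᵀ = vecMulVec w v := by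
  ext i j; simp [vecMulVec_apply, mul_comm]

lemma J_transpose : (symplecticJ n R)ᵀ = -symplecticJ n R := by
  ext i j
  cases i <;> cases j <;>
    simp [symplecticJ, transpose_apply, fromBlocks_apply₁₁, fromBlocks_apply₁₂,
      fromBlocks_apply₂₁, fromBlocks_apply₂₂, one_apply, eq_comm]

lemma Tv_mulVec (v : (Fin n ⊕ Fin n) → R) (c : R) (x : (Fin n ⊕ Fin n) → R) :
    Tv v c *ᵥ x = x + (c * om x v) • v := by
  rw [Tv, add_mulVec, one_mulVec, vecMulVec_mulVec]
  congr 1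
  rw [smul_comm, smul_smul, dotProduct_comm]
  rfl

lemma isSymplectic_Tv (v : (Fin n ⊕ Fin n) → R) (c : R) : IsSymplectic (Tv v c) := by
  set w := symplecticJ n R *ᵥ v with hw
  have hwv : w ⬝ᵥ v = 0 := by
    rw [dotProduct_comm]; exact om_self v
  set M := vecMulVec (c • v) w with hM
  have hTr : (Tv v c)ᵀ = 1 + vecMulVec w (c • v) := by
    rw [Tv, transpose_add, transpose_one, transpose_vecMulVec]
  have hJM : symplecticJ n R * M = vecMulVec (c • w) w := by
    rw [hM, mul_vecMulVec, mulVec_smul, ← hw]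
  have hMJ : vecMulVec w (c • v) * symplecticJ n R = -vecMulVec (c • w) w := by
    rw [vecMulVec_mul]
    have hv : (c • v) ᵥ* symplecticJ n R = -(c • w) := by
      rw [← mulVec_transpose, J_transpose, neg_mulVec, mulVec_smul, ← hw]
    rw [hv]
    ext i j; simp [vecMulVec_apply]; ring
  have hXM : vecMulVec (c • w) w * M = 0 := by
    rw [hM, vecMulVec_mul_vecMulVec]
    have : w ⬝ᵥ c • v = 0 := by rw [dotProduct_smul, hwv, smul_zero]
    rw [this, zero_smul]
  unfold IsSymplectic
  rw [hTr, Tv, ← hM, add_mul, one_mul, add_mul, mul_add, mul_add, mul_one, mul_one]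
  rw [hJM, hMJ, neg_mul, hXM, neg_zero]
  abel

lemma Tv_map (f : R →+* S) (v : (Fin n ⊕ Fin n) → R) (c : R) :
    (Tv v c).map f = Tv (fun i => f (v i)) (f c) := by
  ext i j
  simp only [Tv, map_apply, Matrix.add_apply, vecMulVec_apply, Pi.smul_apply,
    smul_eq_mul, map_add, _root_.map_mul, mulVec_J]
  congr 1
  · by_cases h : i = j <;> simp [one_apply, h]
  · cases j <;> simp

lemma J_map (f : R →+* S) : (symplecticJ n R).map f = symplecticJ n S := by
  ext i j
  cases i <;> cases j <;>
    simp [symplecticJ, map_apply, fromBlocks_apply₁₁, fromBlocks_apply₁₂,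
      fromBlocks_apply₂₁, fromBlocks_apply₂₂, one_apply, apply_ite f]

lemma isSymplectic_map (f : R →+* S) {A : Matrix (Fin n ⊕ Fin n) (Fin n ⊕ Fin n) R}
    (hA : IsSymplectic A) : IsSymplectic (A.map f) := by
  unfold IsSymplectic
  rw [← Matrix.transpose_map, ← J_map f, ← Matrix.map_mul, ← Matrix.map_mul, hA]

lemma isSymplectic_one : IsSymplectic (1 : Matrix (Fin n ⊕ Fin n) (Fin n ⊕ Fin n) R) := by
  simp [IsSymplectic]

lemma isSymplectic_mul {g h : Matrix (Fin n ⊕ Fin n) (Fin n ⊕ Fin n) R}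
    (hg : IsSymplectic g) (hh : IsSymplectic h) : IsSymplectic (g * h) := by
  unfold IsSymplectic at *
  rw [transpose_mul]
  calc hᵀ * gᵀ * symplecticJ n R * (g * h) = hᵀ * (gᵀ * symplecticJ n R * g) * h := by
        simp only [Matrix.mul_assoc]
    _ = symplecticJ n R := by rw [hg, hh]

lemma J_mul_J : symplecticJ n R * symplecticJ n R = -1 := by
  ext i j
  rw [mul_apply]
  cases i <;> cases j <;>
    simp [symplecticJ, Fintype.sum_sum_type, fromBlocks_apply₁₁, fromBlocks_apply₁₂,
      fromBlocks_apply₂₁, fromBlocks_apply₂₂, one_apply, Finset.sum_ite_eq,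
      Finset.sum_ite_eq', eq_comm]

lemma isSymplectic_leftInv {C : Matrix (Fin n ⊕ Fin n) (Fin n ⊕ Fin n) R}
    (hC : IsSymplectic C) :
    (-(symplecticJ n R) * Cᵀ * symplecticJ n R) * C = 1 := by
  calc (-(symplecticJ n R) * Cᵀ * symplecticJ n R) * C
      = -(symplecticJ n R) * (Cᵀ * symplecticJ n R * C) := by simp only [Matrix.mul_assoc]
    _ = -(symplecticJ n R) * symplecticJ n R := by rw [hC]
    _ = 1 := by rw [neg_mul, J_mul_J, neg_neg]

lemma isSymplectic_exists_inv {C : Matrix (Fin n ⊕ Fin n) (Fin n ⊕ Fin n) R}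
    (hC : IsSymplectic C) : ∃ D, D * C = 1 ∧ C * D = 1 := by
  refine ⟨_, isSymplectic_leftInv hC, ?_⟩
  rw [mul_eq_one_comm]
  exact isSymplectic_leftInv hC

end SpDense

namespace SpDense

variable {n : ℕ} {R S : Type*} [CommRing R] [CommRing S]

lemma Tv_mul_Tv_neg (v : (Fin n ⊕ Fin n) → R) (c : R) : Tv v c * Tv v (-c) = 1 := by
  set w := symplecticJ n R *ᵥ v with hw
  have hwv : w ⬝ᵥ v = 0 := by rw [dotProduct_comm]; exact om_self v
  unfold Tv
  rw [add_mul, one_mul, mul_add, mul_one, vecMulVec_mul_vecMulVec]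
  have : w ⬝ᵥ (-c) • v = 0 := by rw [dotProduct_smul, hwv, smul_zero]
  rw [this, zero_smul, add_zero, add_assoc]
  have h0 : vecMulVec ((-c) • v) (symplecticJ n R *ᵥ v)
      + vecMulVec (c • v) (symplecticJ n R *ᵥ v) = 0 := by
    ext i j; simp [vecMulVec_apply]
  rw [h0, add_zero]

/-- invariance of the symplectic form -/
lemma om_mulVec {C : Matrix (Fin n ⊕ Fin n) (Fin n ⊕ Fin n) R} (hC : IsSymplectic C)
    (x y : (Fin n ⊕ Fin n) → R) : om (C *ᵥ x) (C *ᵥ y) = om x y := by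
  unfold om
  rw [mulVec_mulVec, dotProduct_comm, dotProduct_mulVec, ← mulVec_transpose,
    mulVec_mulVec, ← Matrix.mul_assoc, hC, dotProduct_comm]

/-- transvections with `u (inr i) = 0` fix `eV i` -/
lemma Tv_fix_eV (u : (Fin n ⊕ Fin n) → R) (c : R) (i : Fin n) (h : u (Sum.inr i) = 0) :
    Tv u c *ᵥ eV i = eV i := by
  rw [Tv_mulVec, eV_om, h, mul_zero, zero_smul, add_zero]

lemma Tv_fix_fV (u : (Fin n ⊕ Fin n) → R) (c : R) (i : Fin n) (h : u (Sum.inl i) = 0) :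
    Tv u c *ᵥ fV i = fV i := by
  rw [Tv_mulVec, fV_om, h, neg_zero, mul_zero, zero_smul, add_zero]

/-- product of a list of transvections -/
def TProd (L : List (((Fin n ⊕ Fin n) → R) × R)) :
    Matrix (Fin n ⊕ Fin n) (Fin n ⊕ Fin n) R :=
  (L.map fun d => Tv d.1 d.2).prod

@[simp] lemma TProd_nil : TProd ([] : List (((Fin n ⊕ Fin n) → R) × R)) = 1 := rfl

lemma TProd_cons (d : ((Fin n ⊕ Fin n) → R) × R) (L : List (((Fin n ⊕ Fin n) → R) × R)) :
    TProd (d :: L) = Tv d.1 d.2 * TProd L := by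
  simp [TProd]

lemma isSymplectic_TProd (L : List (((Fin n ⊕ Fin n) → R) × R)) :
    IsSymplectic (TProd L) := by
  induction L with
  | nil => exact isSymplectic_one
  | cons d L ih => rw [TProd_cons]; exact isSymplectic_mul (isSymplectic_Tv d.1 d.2) ih

/-- the reversed negated list gives the inverse -/
def invL (L : List (((Fin n ⊕ Fin n) → R) × R)) : List (((Fin n ⊕ Fin n) → R) × R) :=
  (L.map fun d => (d.1, -d.2)).reverse

lemma TProd_mul_TProd_invL (L : List (((Fin n ⊕ Fin n) → R) × R)) :
    TProd L * TProd (invL L) = 1 := by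
  induction L with
  | nil => simp [invL, TProd]
  | cons d L ih =>
      have h : invL (d :: L) = invL L ++ [(d.1, -d.2)] := by simp [invL]
      rw [TProd_cons, h]
      have : TProd (invL L ++ [(d.1, -d.2)]) = TProd (invL L) * Tv d.1 (-d.2) := by
        simp [TProd]
      rw [this, Matrix.mul_assoc, ← Matrix.mul_assoc (TProd L), ih, Matrix.one_mul,
        Tv_mul_Tv_neg]

lemma eq_TProd_invL {B : Matrix (Fin n ⊕ Fin n) (Fin n ⊕ Fin n) R}
    {L : List (((Fin n ⊕ Fin n) → R) × R)} (h : TProd L * B = 1) :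
    B = TProd (invL L) := by
  have h2 : TProd (invL L) * TProd L = 1 := by
    rw [mul_eq_one_comm]; exact TProd_mul_TProd_invL L
  calc B = 1 * B := by rw [Matrix.one_mul]
    _ = TProd (invL L) * TProd L * B := by rw [h2]
    _ = TProd (invL L) * (TProd L * B) := by rw [Matrix.mul_assoc]
    _ = TProd (invL L) := by rw [h, Matrix.mul_one]

lemma TProd_map (f : R →+* S) (L : List (((Fin n ⊕ Fin n) → R) × R)) :
    (TProd L).map f = TProd (L.map fun d => (fun i => f (d.1 i), f d.2)) := by
  induction L with
  | nil => simp [Matrix.map_one f (map_zero f) (map_one f)]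
  | cons d L ih =>
      rw [TProd_cons, List.map_cons, TProd_cons, Matrix.map_mul, ih, Tv_map]

lemma mulVec_eV (M : Matrix (Fin n ⊕ Fin n) (Fin n ⊕ Fin n) R) (i : Fin n) :
    M *ᵥ eV i = fun x => M x (Sum.inl i) := by
  funext x
  simp [mulVec, dotProduct, eV, mul_ite, Finset.sum_ite_eq']

lemma mulVec_fV (M : Matrix (Fin n ⊕ Fin n) (Fin n ⊕ Fin n) R) (i : Fin n) :
    M *ᵥ fV i = fun x => M x (Sum.inr i) := by
  funext x
  simp [mulVec, dotProduct, fV, mul_ite, Finset.sum_ite_eq']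

lemma eq_one_of_fixes {C : Matrix (Fin n ⊕ Fin n) (Fin n ⊕ Fin n) R}
    (h : ∀ i : Fin n, C *ᵥ eV i = eV i ∧ C *ᵥ fV i = fV i) : C = 1 := by
  have key : ∀ y, (fun x => C x y) = fun x => (1 : Matrix (Fin n ⊕ Fin n) (Fin n ⊕ Fin n) R) x y := by
    intro y
    cases y with
    | inl i =>
        rw [← mulVec_eV, (h i).1]; funext x; simp [eV, one_apply]
    | inr i =>
        rw [← mulVec_fV, (h i).2]; funext x; simp [fV, one_apply]
  ext x y
  exact congrFun (key y) x

end SpDense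

namespace SpDense

variable {n : ℕ} {R : Type*} [CommRing R]

lemma Tv_mulVec_apply (u : (Fin n ⊕ Fin n) → R) (c : R) (x : (Fin n ⊕ Fin n) → R)
    (y : Fin n ⊕ Fin n) : (Tv u c *ᵥ x) y = x y + c * om x u * u y := by
  rw [Tv_mulVec]; simp [mul_assoc]

lemma om_sub_right (x u z : (Fin n ⊕ Fin n) → R) :
    om x (u - z) = om x u - om x z := by
  unfold om
  rw [mulVec_sub, dotProduct_sub]

section Local

variable {L F : Type*} [CommRing L] [Field F] (π : L →+* F)
  (hu : ∀ a : L, IsUnit a ↔ π a ≠ 0)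

include hu

lemma loc_nonunit_zero : ¬IsUnit (0 : L) := by
  rw [hu]; simp

lemma loc_pi_eq_zero {a : L} (ha : ¬IsUnit a) : π a = 0 := by
  by_contra h; exact ha ((hu a).mpr h)

lemma loc_add_unit {a b : L} (ha : ¬IsUnit a) (hb : IsUnit b) : IsUnit (a + b) := by
  rw [hu] at hb ⊢
  rw [map_add, loc_pi_eq_zero π hu ha, zero_add]
  exact hb

lemma loc_exists_unit_coord (c v : (Fin n ⊕ Fin n) → L)
    (hsum : ∑ y, c y * v y = 1) : ∃ y, IsUnit (v y) := by
  by_contra h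
  push_neg at h
  have := congrArg π hsum
  rw [map_sum, _root_.map_one] at this
  have hz : ∀ y ∈ Finset.univ, π (c y * v y) = 0 := by
    intro y _
    rw [_root_.map_mul, loc_pi_eq_zero π hu (h y), mul_zero]
  rw [Finset.sum_eq_zero hz] at this
  exact zero_ne_one this

/-- supports are preserved by supported transvections -/
lemma supp_pres {j : ℕ} {v u : (Fin n ⊕ Fin n) → L} {c : L}
    (hv : ∀ i : Fin n, (i : ℕ) < j → v (Sum.inl i) = 0 ∧ v (Sum.inr i) = 0)
    (hus : ∀ i : Fin n, (i : ℕ) < j → u (Sum.inl i) = 0 ∧ u (Sum.inr i) = 0) :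
    ∀ i : Fin n, (i : ℕ) < j →
      (Tv u c *ᵥ v) (Sum.inl i) = 0 ∧ (Tv u c *ᵥ v) (Sum.inr i) = 0 := by
  intro i hi
  constructor <;> rw [Tv_mulVec_apply] <;>
    simp [(hv i hi).1, (hv i hi).2, (hus i hi).1, (hus i hi).2]

omit hu in
lemma ne_of_lt_val {j : Fin n} {i : Fin n} (hi : (i : ℕ) < (j : ℕ)) : i ≠ j := by
  intro h; subst h; exact lt_irrefl _ hi

/-- final step A : one transvection sends `v` with unit `inr j` coordinate to `eV j` -/
lemma stepA_final (j : Fin n) (v : (Fin n ⊕ Fin n) → L)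
    (hsupp : ∀ i : Fin n, (i : ℕ) < (j : ℕ) → v (Sum.inl i) = 0 ∧ v (Sum.inr i) = 0)
    (h1 : IsUnit (v (Sum.inr j))) :
    ∃ u c, (∀ i : Fin n, (i : ℕ) < (j : ℕ) → u (Sum.inl i) = 0 ∧ u (Sum.inr i) = 0) ∧
      Tv u c *ᵥ v = eV j := by
  obtain ⟨cu, hcu⟩ := h1
  refine ⟨eV j - v, -(↑cu⁻¹ : L), ?_, ?_⟩
  · intro i hi
    constructor <;>
      simp [Pi.sub_apply, (hsupp i hi).1, (hsupp i hi).2, ne_of_lt_val hi]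
  · have hom : om v (eV j - v) = -v (Sum.inr j) := by
      rw [om_sub_right, om_eV, om_self, sub_zero]
    rw [Tv_mulVec, hom]
    have : -(↑cu⁻¹ : L) * -v (Sum.inr j) = 1 := by
      rw [neg_mul_neg, ← hcu, Units.inv_mul]
    rw [this, one_smul, add_sub_cancel]

/-- pump step A : make the `inr j` coordinate a unit -/
lemma stepA_pump (j : Fin n) (v : (Fin n ⊕ Fin n) → L)
    (hsupp : ∀ i : Fin n, (i : ℕ) < (j : ℕ) → v (Sum.inl i) = 0 ∧ v (Sum.inr i) = 0)
    (hno : ¬IsUnit (v (Sum.inr j))) (y : Fin n ⊕ Fin n) (hy : IsUnit (v y)) :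
    ∃ u c, (∀ i : Fin n, (i : ℕ) < (j : ℕ) → u (Sum.inl i) = 0 ∧ u (Sum.inr i) = 0) ∧
      IsUnit ((Tv u c *ᵥ v) (Sum.inr j)) := by
  by_cases hj : IsUnit (v (Sum.inl j))
  · refine ⟨fV j, 1, ?_, ?_⟩
    · intro i hi
      constructor <;> simp [ne_of_lt_val hi]
    · have : (Tv (fV j) 1 *ᵥ v) (Sum.inr j) = v (Sum.inr j) + v (Sum.inl j) := by
        rw [Tv_mulVec_apply, om_fV]; simp
      rw [this]; exact loc_add_unit π hu hno hj
  · -- both `inl j` and `inr j` coordinates are nonunits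
    cases y with
    | inl l =>
        have hlj : l ≠ j := by rintro rfl; exact hj hy
        have hlnot : ¬((l : ℕ) < (j : ℕ)) := by
          intro h; rw [(hsupp l h).1] at hy; exact loc_nonunit_zero π hu hy
        refine ⟨fV j + fV l, 1, ?_, ?_⟩
        · intro i hi
          constructor
          · simp
          · have h1 : i ≠ j := ne_of_lt_val hi
            have h2 : i ≠ l := by rintro rfl; exact hlnot hi
            simp [h1, h2]
        · have homu : om v (fV j + fV l) = v (Sum.inl j) + v (Sum.inl l) := by
            rw [om_add_right, om_fV, om_fV]
          rw [Tv_mulVec_apply, homu]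
          have hunit : IsUnit (v (Sum.inl j) + v (Sum.inl l)) := loc_add_unit π hu hj hy
          have : ((fV j + fV l : (Fin n ⊕ Fin n) → L)) (Sum.inr j) = 1 := by
            simp [Ne.symm hlj, hlj]
          rw [this, mul_one, one_mul]
          exact loc_add_unit π hu hno hunit
    | inr l =>
        have hlj : l ≠ j := by rintro rfl; exact hno hy
        have hlnot : ¬((l : ℕ) < (j : ℕ)) := by
          intro h; rw [(hsupp l h).2] at hy; exact loc_nonunit_zero π hu hy
        refine ⟨fV j + eV l, 1, ?_, ?_⟩
        · intro i hi
          constructor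
          · have h2 : i ≠ l := by rintro rfl; exact hlnot hi
            simp [h2]
          · have h1 : i ≠ j := ne_of_lt_val hi
            simp [h1]
        · have homu : om v (fV j + eV l) = v (Sum.inl j) + -v (Sum.inr l) := by
            rw [om_add_right, om_fV, om_eV]
          rw [Tv_mulVec_apply, homu]
          have hunit : IsUnit (v (Sum.inl j) + -v (Sum.inr l)) :=
            loc_add_unit π hu hj hy.neg
          have : ((fV j + eV l : (Fin n ⊕ Fin n) → L)) (Sum.inr j) = 1 := by
            simp [hlj]
          rw [this, mul_one, one_mul]
          exact loc_add_unit π hu hno hunit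

/-- step A : two transvections take a unimodular supported vector to `eV j` -/
lemma stepA (j : Fin n) (v : (Fin n ⊕ Fin n) → L)
    (hsupp : ∀ i : Fin n, (i : ℕ) < (j : ℕ) → v (Sum.inl i) = 0 ∧ v (Sum.inr i) = 0)
    (huni : ∃ c : (Fin n ⊕ Fin n) → L, ∑ y, c y * v y = 1) :
    ∃ u₁ c₁ u₂ c₂,
      (∀ i : Fin n, (i : ℕ) < (j : ℕ) → u₁ (Sum.inl i) = 0 ∧ u₁ (Sum.inr i) = 0) ∧
      (∀ i : Fin n, (i : ℕ) < (j : ℕ) → u₂ (Sum.inl i) = 0 ∧ u₂ (Sum.inr i) = 0) ∧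
      Tv u₂ c₂ *ᵥ (Tv u₁ c₁ *ᵥ v) = eV j := by
  by_cases h1 : IsUnit (v (Sum.inr j))
  · obtain ⟨u, c, hs, he⟩ := stepA_final π hu j v hsupp h1
    refine ⟨0, 0, u, c, by simp, hs, ?_⟩
    have : Tv (0 : (Fin n ⊕ Fin n) → L) 0 *ᵥ v = v := by
      rw [Tv_mulVec]; simp
    rw [this, he]
  · obtain ⟨c, hc⟩ := huni
    obtain ⟨y, hy⟩ := loc_exists_unit_coord π hu c v hc
    obtain ⟨u₁, c₁, hs₁, hunit⟩ := stepA_pump π hu j v hsupp h1 y hy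
    have hsupp' := supp_pres π hu hsupp hs₁ (c := c₁)
    obtain ⟨u₂, c₂, hs₂, he⟩ := stepA_final π hu j _ hsupp' hunit
    exact ⟨u₁, c₁, u₂, c₂, hs₁, hs₂, he⟩

/-- step B : two transvections (fixing `eV j`) take `w` to `fV j` -/
lemma stepB (j : Fin n) (w : (Fin n ⊕ Fin n) → L)
    (hsupp : ∀ i : Fin n, (i : ℕ) < (j : ℕ) → w (Sum.inl i) = 0 ∧ w (Sum.inr i) = 0)
    (hw : w (Sum.inr j) = 1) :
    ∃ u₁ c₁ u₂ c₂,
      (∀ i : Fin n, (i : ℕ) < (j : ℕ) → u₁ (Sum.inl i) = 0 ∧ u₁ (Sum.inr i) = 0) ∧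
      (∀ i : Fin n, (i : ℕ) < (j : ℕ) → u₂ (Sum.inl i) = 0 ∧ u₂ (Sum.inr i) = 0) ∧
      u₁ (Sum.inr j) = 0 ∧ u₂ (Sum.inr j) = 0 ∧
      Tv u₂ c₂ *ᵥ (Tv u₁ c₁ *ᵥ w) = fV j := by
  classical
  set c₁ : L := if IsUnit (w (Sum.inl j)) then 0 else w (Sum.inl j) - 1 with hc₁
  set w' := Tv (eV j) c₁ *ᵥ w with hw'
  have hwapp : ∀ y, w' y = w y + c₁ * -(1 : L) * eV j y := by
    intro y; rw [hw', Tv_mulVec_apply, om_eV, hw]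
  have hw'inl : w' (Sum.inl j) = w (Sum.inl j) - c₁ := by
    rw [hwapp]; simp; ring
  have hw'inr : w' (Sum.inr j) = 1 := by
    rw [hwapp]; simp [hw]
  have hw'unit : IsUnit (w' (Sum.inl j)) := by
    rw [hw'inl, hc₁]
    by_cases h : IsUnit (w (Sum.inl j))
    · simpa [h] using h
    · simp only [h, if_false]
      have : w (Sum.inl j) - (w (Sum.inl j) - 1) = 1 := by ring
      rw [this]; exact isUnit_one
  have hsupp' : ∀ i : Fin n, (i : ℕ) < (j : ℕ) → w' (Sum.inl i) = 0 ∧ w' (Sum.inr i) = 0 := by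
    intro i hi
    constructor <;> rw [hwapp] <;> simp [(hsupp i hi).1, (hsupp i hi).2, ne_of_lt_val hi]
  obtain ⟨du, hdu⟩ := hw'unit
  refine ⟨eV j, c₁, fV j - w', (↑du⁻¹ : L), ?_, ?_, ?_, ?_, ?_⟩
  · intro i hi; constructor <;> simp [ne_of_lt_val hi]
  · intro i hi
    constructor <;>
      simp [Pi.sub_apply, (hsupp' i hi).1, (hsupp' i hi).2, ne_of_lt_val hi]
  · simp
  · simp [Pi.sub_apply, hw'inr]
  · rw [← hw']
    have hom : om w' (fV j - w') = w' (Sum.inl j) := by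
      rw [om_sub_right, om_fV, om_self, sub_zero]
    rw [Tv_mulVec, hom, ← hdu, Units.inv_mul, one_smul, add_sub_cancel]

end Local

end SpDense

namespace SpDense

variable {n : ℕ}

/-- the finite product ring `∏_{p ∈ S} ℤ/p^k` -/
abbrev PiZMod (S : Finset Nat.Primes) (k : ℕ) : Type :=
  ∀ p : S, ZMod (((p : Nat.Primes) : ℕ) ^ k)

lemma zmod_unit_iff {p k : ℕ} (hp : p.Prime) (hk : k ≠ 0) (a : ZMod (p ^ k)) :
    IsUnit a ↔ ZMod.castHom (dvd_pow_self p hk) (ZMod p) a ≠ 0 := by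
  haveI : Fact p.Prime := ⟨hp⟩
  haveI : NeZero (p ^ k) := ⟨pow_ne_zero k hp.ne_zero⟩
  constructor
  · intro h h0
    have h2 := h.map (ZMod.castHom (dvd_pow_self p hk) (ZMod p))
    rw [h0] at h2
    exact h2.ne_zero rfl
  · intro h
    have ha : a = ((a.val : ℕ) : ZMod (p ^ k)) := (ZMod.natCast_zmod_val a).symm
    rw [ha, ZMod.isUnit_iff_coprime]
    have hnd : ¬ p ∣ a.val := by
      intro hdvd
      apply h
      have h3 : ZMod.castHom (dvd_pow_self p hk) (ZMod p) a = ((a.val : ℕ) : ZMod p) := by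
        conv_lhs => rw [ha]
        rw [map_natCast]
      rw [h3, ZMod.natCast_eq_zero_iff]
      exact hdvd
    exact (((Nat.Prime.coprime_iff_not_dvd hp).mpr hnd).symm).pow_right k

/-- Chinese remainder: simultaneous integral lifts -/
lemma exists_int_cast (S : Finset Nat.Primes) (k : ℕ) (r : PiZMod S k) :
    ∃ m : ℤ, ∀ p : S, ((m : ℤ) : ZMod (((p : Nat.Primes) : ℕ) ^ k)) = r p := by
  have cop : Pairwise (Function.onFun Nat.Coprime fun p : S => ((p : Nat.Primes) : ℕ) ^ k) := by
    intro p q hne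
    have hpq : ((p : Nat.Primes) : ℕ) ≠ ((q : Nat.Primes) : ℕ) := by
      intro h; exact hne (Subtype.ext (Subtype.ext h))
    exact Nat.Coprime.pow _ _ ((Nat.coprime_primes (p : Nat.Primes).2 (q : Nat.Primes).2).mpr hpq)
  let e := ZMod.prodEquivPi _ cop
  obtain ⟨m, hm⟩ := ZMod.intCast_surjective (e.symm r)
  refine ⟨m, fun p => ?_⟩
  have h1 : e ((m : ℤ) : ZMod (∏ p : S, ((p : Nat.Primes) : ℕ) ^ k)) p
      = ((m : ℤ) : ZMod (((p : Nat.Primes) : ℕ) ^ k)) :=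
    eq_intCast ((Pi.evalRingHom (fun q : S => ZMod (((q : Nat.Primes) : ℕ) ^ k)) p).comp
      (e.toRingHom.comp
        (Int.castRingHom (ZMod (∏ p : S, ((p : Nat.Primes) : ℕ) ^ k))))) m
  rw [hm, RingEquiv.apply_symm_apply] at h1
  exact h1.symm

section Assemble

variable (S : Finset Nat.Primes) (k : ℕ)

lemma eV_pi (j : Fin n) (y : Fin n ⊕ Fin n) (p : S) :
    (eV j y : PiZMod S k) p = (eV j y : ZMod (((p : Nat.Primes) : ℕ) ^ k)) := by
  unfold eV; split <;> rfl

lemma fV_pi (j : Fin n) (y : Fin n ⊕ Fin n) (p : S) :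
    (fV j y : PiZMod S k) p = (fV j y : ZMod (((p : Nat.Primes) : ℕ) ^ k)) := by
  unfold fV; split <;> rfl

lemma Tv_comp (u : (Fin n ⊕ Fin n) → PiZMod S k) (c : PiZMod S k)
    (x : (Fin n ⊕ Fin n) → PiZMod S k) (p : S) :
    (fun i => (Tv u c *ᵥ x) i p) = Tv (fun i => u i p) (c p) *ᵥ (fun i => x i p) := by
  funext y
  rw [Tv_mulVec_apply, Tv_mulVec_apply]
  show x y p + (c * om x u) p * u y p = _
  rw [Pi.mul_apply,
    show (om x u) p = om (fun i => x i p) (fun i => u i p) from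
      om_map (Pi.evalRingHom (fun q : S => ZMod (((q : Nat.Primes) : ℕ) ^ k)) p) x u]

variable (hk : k ≠ 0)
include hk

set_option maxHeartbeats 1000000 in
lemma stepA_pi (j : Fin n) (v : (Fin n ⊕ Fin n) → PiZMod S k)
    (hsupp : ∀ i : Fin n, (i : ℕ) < (j : ℕ) → v (Sum.inl i) = 0 ∧ v (Sum.inr i) = 0)
    (huni : ∃ c : (Fin n ⊕ Fin n) → PiZMod S k, ∑ y, c y * v y = 1) :
    ∃ u₁ c₁ u₂ c₂,
      (∀ i : Fin n, (i : ℕ) < (j : ℕ) → u₁ (Sum.inl i) = 0 ∧ u₁ (Sum.inr i) = 0) ∧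
      (∀ i : Fin n, (i : ℕ) < (j : ℕ) → u₂ (Sum.inl i) = 0 ∧ u₂ (Sum.inr i) = 0) ∧
      Tv u₂ c₂ *ᵥ (Tv u₁ c₁ *ᵥ v) = eV j := by
  obtain ⟨c, hc⟩ := huni
  have H : ∀ p : S, ∃ u₁ c₁ u₂ c₂,
      (∀ i : Fin n, (i : ℕ) < (j : ℕ) → u₁ (Sum.inl i) = 0 ∧ u₁ (Sum.inr i) = 0) ∧
      (∀ i : Fin n, (i : ℕ) < (j : ℕ) → u₂ (Sum.inl i) = 0 ∧ u₂ (Sum.inr i) = 0) ∧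
      Tv u₂ c₂ *ᵥ (Tv u₁ c₁ *ᵥ (fun y => v y p)) = eV j := by
    intro p
    refine stepA (ZMod.castHom (dvd_pow_self _ hk) (ZMod ((p : Nat.Primes) : ℕ)))
      (zmod_unit_iff (p : Nat.Primes).2 hk) j (fun y => v y p) ?_ ?_
    · intro i hi
      refine ⟨?_, ?_⟩
      · show v (Sum.inl i) p = 0
        rw [(hsupp i hi).1]; rfl
      · show v (Sum.inr i) p = 0
        rw [(hsupp i hi).2]; rfl
    · refine ⟨fun y => c y p, ?_⟩
      have h := congrArg (fun z : PiZMod S k => z p) hc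
      simpa [Finset.sum_apply] using h
  choose u₁f c₁f u₂f c₂f hs₁ hs₂ hact using H
  refine ⟨fun y p => u₁f p y, fun p => c₁f p, fun y p => u₂f p y, fun p => c₂f p,
    ?_, ?_, ?_⟩
  · intro i hi
    exact ⟨funext fun p => (hs₁ p i hi).1, funext fun p => (hs₁ p i hi).2⟩
  · intro i hi
    exact ⟨funext fun p => (hs₂ p i hi).1, funext fun p => (hs₂ p i hi).2⟩
  · funext y
    funext p
    have h2 := Tv_comp S k (fun y p => u₂f p y) (fun p => c₂f p)
      (Tv (fun y p => u₁f p y) (fun p => c₁f p) *ᵥ v) p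
    have h1 := Tv_comp S k (fun y p => u₁f p y) (fun p => c₁f p) v p
    refine (congrFun h2 y).trans ?_
    rw [h1]
    exact (congrFun (hact p) y).trans (eV_pi S k j y p).symm

set_option maxHeartbeats 1000000 in
lemma stepB_pi (j : Fin n) (w : (Fin n ⊕ Fin n) → PiZMod S k)
    (hsupp : ∀ i : Fin n, (i : ℕ) < (j : ℕ) → w (Sum.inl i) = 0 ∧ w (Sum.inr i) = 0)
    (hw : w (Sum.inr j) = 1) :
    ∃ u₁ c₁ u₂ c₂,
      (∀ i : Fin n, (i : ℕ) < (j : ℕ) → u₁ (Sum.inl i) = 0 ∧ u₁ (Sum.inr i) = 0) ∧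
      (∀ i : Fin n, (i : ℕ) < (j : ℕ) → u₂ (Sum.inl i) = 0 ∧ u₂ (Sum.inr i) = 0) ∧
      u₁ (Sum.inr j) = 0 ∧ u₂ (Sum.inr j) = 0 ∧
      Tv u₂ c₂ *ᵥ (Tv u₁ c₁ *ᵥ w) = fV j := by
  have H : ∀ p : S, ∃ u₁ c₁ u₂ c₂,
      (∀ i : Fin n, (i : ℕ) < (j : ℕ) → u₁ (Sum.inl i) = 0 ∧ u₁ (Sum.inr i) = 0) ∧
      (∀ i : Fin n, (i : ℕ) < (j : ℕ) → u₂ (Sum.inl i) = 0 ∧ u₂ (Sum.inr i) = 0) ∧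
      u₁ (Sum.inr j) = 0 ∧ u₂ (Sum.inr j) = 0 ∧
      Tv u₂ c₂ *ᵥ (Tv u₁ c₁ *ᵥ (fun y => w y p)) = fV j := by
    intro p
    refine stepB (ZMod.castHom (dvd_pow_self _ hk) (ZMod ((p : Nat.Primes) : ℕ)))
      (zmod_unit_iff (p : Nat.Primes).2 hk) j (fun y => w y p) ?_ ?_
    · intro i hi
      refine ⟨?_, ?_⟩
      · show w (Sum.inl i) p = 0
        rw [(hsupp i hi).1]; rfl
      · show w (Sum.inr i) p = 0
        rw [(hsupp i hi).2]; rfl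
    · show w (Sum.inr j) p = 1
      rw [hw]; rfl
  choose u₁f c₁f u₂f c₂f hs₁ hs₂ hz₁ hz₂ hact using H
  refine ⟨fun y p => u₁f p y, fun p => c₁f p, fun y p => u₂f p y, fun p => c₂f p,
    ?_, ?_, funext fun p => hz₁ p, funext fun p => hz₂ p, ?_⟩
  · intro i hi
    exact ⟨funext fun p => (hs₁ p i hi).1, funext fun p => (hs₁ p i hi).2⟩
  · intro i hi
    exact ⟨funext fun p => (hs₂ p i hi).1, funext fun p => (hs₂ p i hi).2⟩
  · funext y
    funext p
    have h2 := Tv_comp S k (fun y p => u₂f p y) (fun p => c₂f p)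
      (Tv (fun y p => u₁f p y) (fun p => c₁f p) *ᵥ w) p
    have h1 := Tv_comp S k (fun y p => u₁f p y) (fun p => c₁f p) w p
    refine (congrFun h2 y).trans ?_
    rw [h1]
    exact (congrFun (hact p) y).trans (fV_pi S k j y p).symm

end Assemble

end SpDense

namespace SpDense

variable {n : ℕ}

set_option maxHeartbeats 1000000 in
lemma reduce (S : Finset Nat.Primes) (k : ℕ) (hk : k ≠ 0)
    (B : Matrix (Fin n ⊕ Fin n) (Fin n ⊕ Fin n) (PiZMod S k)) (hB : IsSymplectic B) :
    ∀ m : ℕ, m ≤ n → ∃ Ld : List (((Fin n ⊕ Fin n) → PiZMod S k) × PiZMod S k),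
      ∀ i : Fin n, (i : ℕ) < m →
        (TProd Ld * B) *ᵥ eV i = eV i ∧ (TProd Ld * B) *ᵥ fV i = fV i := by
  intro m
  induction m with
  | zero => exact fun _ => ⟨[], fun i hi => absurd hi (Nat.not_lt_zero _)⟩
  | succ m ih =>
    intro hm
    obtain ⟨Ld, hLd⟩ := ih (le_trans (Nat.le_succ m) hm)
    set C := TProd Ld * B with hC
    have hCsymp : IsSymplectic C := isSymplectic_mul (isSymplectic_TProd Ld) hB
    set jF : Fin n := ⟨m, hm⟩ with hjF
    have hjm : (jF : ℕ) = m := rfl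
    set v := C *ᵥ eV jF with hv
    have hvsupp : ∀ i : Fin n, (i : ℕ) < (jF : ℕ) →
        v (Sum.inl i) = 0 ∧ v (Sum.inr i) = 0 := by
      intro i hi
      have hinej : i ≠ jF := ne_of_lt_val hi
      constructor
      · have h2 : om (fV i) v = 0 := by
          rw [hv]
          conv_lhs => rw [← (hLd i hi).2]
          rw [om_mulVec hCsymp, fV_om]
          simp [hinej]
        have h1 := fV_om v i
        rw [h2] at h1
        exact neg_eq_zero.mp h1.symm
      · have h2 : om (eV i) v = 0 := by
          rw [hv]
          conv_lhs => rw [← (hLd i hi).1]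
          rw [om_mulVec hCsymp, eV_om]
          simp
        have h1 := eV_om v i
        rw [h2] at h1
        exact h1.symm
    have hvuni : ∃ c : (Fin n ⊕ Fin n) → PiZMod S k, ∑ y, c y * v y = 1 := by
      obtain ⟨D, hDC, _⟩ := isSymplectic_exists_inv hCsymp
      refine ⟨fun y => D (Sum.inl jF) y, ?_⟩
      have h1 : D *ᵥ v = eV jF := by rw [hv, mulVec_mulVec, hDC, one_mulVec]
      have h2 := congrFun h1 (Sum.inl jF)
      simpa [mulVec, dotProduct, eV] using h2
    obtain ⟨u₁, c₁, u₂, c₂, hs₁, hs₂, hact⟩ := stepA_pi S k hk jF v hvsupp hvuni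
    set C₁ := Tv u₂ c₂ * (Tv u₁ c₁ * C) with hC₁
    have hC₁symp : IsSymplectic C₁ :=
      isSymplectic_mul (isSymplectic_Tv _ _) (isSymplectic_mul (isSymplectic_Tv _ _) hCsymp)
    have hC₁e : C₁ *ᵥ eV jF = eV jF := by
      rw [hC₁, ← mulVec_mulVec, ← mulVec_mulVec, ← hv, hact]
    have hC₁fix : ∀ i : Fin n, (i : ℕ) < m → C₁ *ᵥ eV i = eV i ∧ C₁ *ᵥ fV i = fV i := by
      intro i hi
      constructor
      · rw [hC₁, ← mulVec_mulVec, ← mulVec_mulVec, (hLd i hi).1,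
          Tv_fix_eV u₁ c₁ i (hs₁ i hi).2, Tv_fix_eV u₂ c₂ i (hs₂ i hi).2]
      · rw [hC₁, ← mulVec_mulVec, ← mulVec_mulVec, (hLd i hi).2,
          Tv_fix_fV u₁ c₁ i (hs₁ i hi).1, Tv_fix_fV u₂ c₂ i (hs₂ i hi).1]
    set w := C₁ *ᵥ fV jF with hw
    have hwsupp : ∀ i : Fin n, (i : ℕ) < (jF : ℕ) →
        w (Sum.inl i) = 0 ∧ w (Sum.inr i) = 0 := by
      intro i hi
      have hinej : i ≠ jF := ne_of_lt_val hi
      constructor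
      · have h2 : om (fV i) w = 0 := by
          rw [hw]
          conv_lhs => rw [← (hC₁fix i hi).2]
          rw [om_mulVec hC₁symp, fV_om]
          simp
        have h1 := fV_om w i
        rw [h2] at h1
        exact neg_eq_zero.mp h1.symm
      · have h2 : om (eV i) w = 0 := by
          rw [hw]
          conv_lhs => rw [← (hC₁fix i hi).1]
          rw [om_mulVec hC₁symp, eV_om]
          simp [hinej]
        have h1 := eV_om w i
        rw [h2] at h1
        exact h1.symm
    have hwinr : w (Sum.inr jF) = 1 := by
      have h2 : om (eV jF) w = 1 := by
        rw [hw]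
        conv_lhs => rw [← hC₁e]
        rw [om_mulVec hC₁symp, eV_om]
        simp
      have h1 := eV_om w jF
      rw [h2] at h1
      exact h1.symm
    obtain ⟨u₃, c₃, u₄, c₄, hs₃, hs₄, hz₃, hz₄, hact₂⟩ := stepB_pi S k hk jF w hwsupp hwinr
    refine ⟨(u₄, c₄) :: (u₃, c₃) :: (u₂, c₂) :: (u₁, c₁) :: Ld, ?_⟩
    have hT : TProd ((u₄, c₄) :: (u₃, c₃) :: (u₂, c₂) :: (u₁, c₁) :: Ld) * B
        = Tv u₄ c₄ * (Tv u₃ c₃ * C₁) := by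
      rw [TProd_cons, TProd_cons, TProd_cons, TProd_cons, hC₁, hC]
      simp only [Matrix.mul_assoc]
    intro i hi
    rcases Nat.lt_succ_iff_lt_or_eq.mp hi with hlt | heq
    · constructor
      · rw [hT, ← mulVec_mulVec, ← mulVec_mulVec, (hC₁fix i hlt).1,
          Tv_fix_eV u₃ c₃ i (hs₃ i hlt).2, Tv_fix_eV u₄ c₄ i (hs₄ i hlt).2]
      · rw [hT, ← mulVec_mulVec, ← mulVec_mulVec, (hC₁fix i hlt).2,
          Tv_fix_fV u₃ c₃ i (hs₃ i hlt).1, Tv_fix_fV u₄ c₄ i (hs₄ i hlt).1]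
    · have hij : i = jF := Fin.ext heq
      constructor
      · rw [hij, hT, ← mulVec_mulVec, ← mulVec_mulVec, hC₁e,
          Tv_fix_eV u₃ c₃ jF hz₃, Tv_fix_eV u₄ c₄ jF hz₄]
      · rw [hij, hT, ← mulVec_mulVec, ← mulVec_mulVec, ← hw, hact₂]

/-- Strong approximation for `Sp`: every symplectic matrix over `∏_{p ∈ S} ℤ/p^k`
lifts to an integral symplectic matrix. -/
theorem lift_exists (S : Finset Nat.Primes) (k : ℕ) (hk : k ≠ 0)
    (Abar : Matrix (Fin n ⊕ Fin n) (Fin n ⊕ Fin n) (PiZMod S k))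
    (hAbar : IsSymplectic Abar) :
    ∃ σ : Matrix (Fin n ⊕ Fin n) (Fin n ⊕ Fin n) ℤ, IsSymplectic σ ∧
      ∀ i j (p : S), Abar i j p = ((σ i j : ℤ) : ZMod (((p : Nat.Primes) : ℕ) ^ k)) := by
  obtain ⟨Ld, hLd⟩ := reduce S k hk Abar hAbar n le_rfl
  have h1 : TProd Ld * Abar = 1 := eq_one_of_fixes (fun i => hLd i i.isLt)
  have h2 : Abar = TProd (invL Ld) := eq_TProd_invL h1
  set φ : ℤ →+* PiZMod S k :=
    Pi.ringHom (fun p => Int.castRingHom (ZMod (((p : Nat.Primes) : ℕ) ^ k))) with hφ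
  have lift : ∀ d : ((Fin n ⊕ Fin n) → PiZMod S k) × PiZMod S k,
      ∃ d' : ((Fin n ⊕ Fin n) → ℤ) × ℤ, ((fun i => φ (d'.1 i), φ d'.2) :
        ((Fin n ⊕ Fin n) → PiZMod S k) × PiZMod S k) = d := by
    intro d
    have h3 : ∀ y, ∃ my : ℤ, ∀ p : S,
        ((my : ℤ) : ZMod (((p : Nat.Primes) : ℕ) ^ k)) = d.1 y p :=
      fun y => exists_int_cast S k (d.1 y)
    choose mf hmf using h3
    obtain ⟨mc, hmc⟩ := exists_int_cast S k d.2
    refine ⟨(mf, mc), Prod.ext ?_ ?_⟩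
    · funext y
      funext p
      exact hmf y p
    · funext p
      exact hmc p
  choose liftD hliftD using lift
  refine ⟨TProd ((invL Ld).map liftD), isSymplectic_TProd _, fun i j p => ?_⟩
  have h4 : Abar = (TProd ((invL Ld).map liftD)).map ⇑φ := by
    rw [TProd_map φ, List.map_map, h2]
    congr 1
    have h5 : ∀ d ∈ invL Ld,
        ((fun d' : ((Fin n ⊕ Fin n) → ℤ) × ℤ => ((fun i => φ (d'.1 i), φ d'.2) :
          ((Fin n ⊕ Fin n) → PiZMod S k) × PiZMod S k)) ∘ liftD) d = d :=
      fun d _ => hliftD d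
    rw [List.map_congr_left h5, List.map_id']
  rw [h4]
  rfl

end SpDense


open SpDense in
/-- **`Sp(n, ℤ)` is dense in `Sp(n, ẑ)`** where `ẑ = ∏_p ℤ_p`: every symplectic matrix over
`ẑ` lies in the closure of the set of (diagonally embedded) integral symplectic matrices. -/
theorem sp_int_dense_in_sp_zhat {n : ℕ} (hn : 1 ≤ n)
    (A : Matrix (Fin n ⊕ Fin n) (Fin n ⊕ Fin n) ZHat)
    (hA : IsSymplectic A) :
    A ∈ closure {B : Matrix (Fin n ⊕ Fin n) (Fin n ⊕ Fin n) ZHat |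
      ∃ σ : Matrix (Fin n ⊕ Fin n) (Fin n ⊕ Fin n) ℤ,
        IsSymplectic σ ∧ B = σ.map intToZHat} := by
  classical
  haveI hFC : FirstCountableTopology (Matrix (Fin n ⊕ Fin n) (Fin n ⊕ Fin n) ZHat) :=
    inferInstanceAs (FirstCountableTopology ((Fin n ⊕ Fin n) → (Fin n ⊕ Fin n) → ZHat))
  rw [mem_closure_iff_seq_limit]
  set Sm : ℕ → Finset Nat.Primes :=
    fun m => (Finset.range (m + 1)).subtype (fun x => Nat.Prime x) with hSm
  set km : ℕ → ℕ := fun m => max m 1 with hkm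
  have hkm0 : ∀ m, km m ≠ 0 :=
    fun m => (lt_of_lt_of_le zero_lt_one (le_max_right m 1)).ne'
  set ρ : ∀ m, ZHat →+* SpDense.PiZMod (Sm m) (km m) := fun m =>
    Pi.ringHom (fun p => (PadicInt.toZModPow (km m)).comp
      (Pi.evalRingHom (fun q : Nat.Primes => ℤ_[(q : ℕ)]) (p : Nat.Primes))) with hρ
  have hAbar : ∀ m, IsSymplectic (A.map ⇑(ρ m)) := fun m => isSymplectic_map (ρ m) hA
  have hσ := fun m => lift_exists (Sm m) (km m) (hkm0 m) (A.map ⇑(ρ m)) (hAbar m)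
  choose σ hσsymp hσcong using hσ
  refine ⟨fun m => (σ m).map intToZHat, fun m => ⟨σ m, hσsymp m, rfl⟩, ?_⟩
  have key : ∀ (i j : Fin n ⊕ Fin n) (p : Nat.Primes),
      Filter.Tendsto (fun m => ((σ m i j : ℤ) : ℤ_[(p : ℕ)])) Filter.atTop (nhds (A i j p)) := by
    intro i j p
    rw [Metric.tendsto_atTop]
    intro ε hε
    obtain ⟨t, ht⟩ := PadicInt.exists_pow_neg_lt (p : ℕ) hε
    refine ⟨max (p : ℕ) t, fun m hm => ?_⟩
    have hpm : ((p : ℕ)) < m + 1 := Nat.lt_succ_of_le (le_trans (le_max_left _ _) hm)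
    have hpS : (p : Nat.Primes) ∈ Sm m := by
      rw [hSm]; exact Finset.mem_subtype.mpr (Finset.mem_range.mpr hpm)
    have ht' : t ≤ km m :=
      le_trans (le_max_right (p : ℕ) t) (le_trans hm (le_max_left m 1))
    have hcong := hσcong m i j ⟨(p : Nat.Primes), hpS⟩
    have hker : ((σ m i j : ℤ) : ℤ_[(p : ℕ)]) - A i j p ∈
        (Ideal.span {((p : ℕ) : ℤ_[(p : ℕ)]) ^ (km m)} : Ideal ℤ_[(p : ℕ)]) := by
      rw [← PadicInt.ker_toZModPow, RingHom.mem_ker, map_sub, sub_eq_zero]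
      have hcast : PadicInt.toZModPow (km m) ((σ m i j : ℤ) : ℤ_[(p : ℕ)])
          = ((σ m i j : ℤ) : ZMod ((p : ℕ) ^ (km m))) :=
        eq_intCast ((PadicInt.toZModPow (km m)).comp (Int.castRingHom ℤ_[(p : ℕ)])) (σ m i j)
      rw [hcast]
      exact hcong.symm
    have hnorm := (PadicInt.norm_le_pow_iff_mem_span_pow _ (km m)).mpr hker
    rw [dist_eq_norm]
    calc ‖((σ m i j : ℤ) : ℤ_[(p : ℕ)]) - A i j p‖
        ≤ ((p : ℕ) : ℝ) ^ (-(km m : ℤ)) := hnorm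
      _ ≤ ((p : ℕ) : ℝ) ^ (-(t : ℤ)) := by
          apply zpow_le_zpow_right₀
          · exact_mod_cast (p : Nat.Primes).2.one_lt.le
          · exact neg_le_neg (by exact_mod_cast ht')
      _ < ε := ht
  exact tendsto_pi_nhds.mpr fun i => tendsto_pi_nhds.mpr fun j =>
    tendsto_pi_nhds.mpr fun p => key i j p
end
end
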